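/- arXiv:0809.4856 — 3 statements merged into one kernel-verified Lean document; each statement's English description precedes it below -/
import Mathlib

section
/- Let Z be a bounded random variable on a finite probability space with E(Z) = m, and let {∅,Ω} = F_0 ⊆ F_1 ⊆ ... ⊆ F_t be a filtration. Let Z_j = E(Z | F_j), let ran_j be the conditional range of Z_j given F_{j−1}, let R_t² = Σ_{j=1}^t ran_j², and let r̂_t² = sup_ω R_t²(ω). Then for all u ≥ 0, P(|Z − m| ≥ u) ≤ 2·exp(−2u²/r̂_t²). More generally, for any value r², P({|Z − m| ≥ u} ∩ {R_t² ≤ r²}) ≤ 2·exp(−2u²/r²). -/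
open MeasureTheory

noncomputable section

variable {Ω : Type*}

/-- The conditional supremum of `Y` in the σ-field `F`: at `ω` it is the maximum
of `Y` over the smallest `F`-measurable event containing `ω`. -/
def condSup (F : MeasurableSpace Ω) (Y : Ω → ℝ) (ω : Ω) : ℝ :=
  sInf {r | ∃ A : Set Ω, MeasurableSet[F] A ∧ ω ∈ A ∧ r = sSup (Y '' A)}

/-- The conditional range of `Y` in the σ-field `F`. -/
def condRange (F : MeasurableSpace Ω) (Y : Ω → ℝ) (ω : Ω) : ℝ :=
  condSup F Y ω + condSup F (fun ω' => -Y ω') ω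

def atomOf (F : MeasurableSpace Ω) (ω : Ω) : Set Ω :=
  ⋂₀ {A : Set Ω | MeasurableSet[F] A ∧ ω ∈ A}

lemma mem_atomOf (F : MeasurableSpace Ω) (ω : Ω) : ω ∈ atomOf F ω :=
  fun _ hA => hA.2

lemma atomOf_subset {F : MeasurableSpace Ω} {A : Set Ω} (hA : MeasurableSet[F] A)
    {ω : Ω} (hω : ω ∈ A) : atomOf F ω ⊆ A :=
  Set.sInter_subset_of_mem ⟨hA, hω⟩

lemma measurableSet_atomOf [Finite Ω] (F : MeasurableSpace Ω) (ω : Ω) :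
    MeasurableSet[F] (atomOf F ω) :=
  MeasurableSet.sInter (Set.to_countable _) (fun _ hA => hA.1)

lemma atomOf_eq_of_mem [Finite Ω] {F : MeasurableSpace Ω} {ω ω' : Ω}
    (h : ω' ∈ atomOf F ω) : atomOf F ω' = atomOf F ω := by
  have hω : ω ∈ atomOf F ω' := by
    intro A hA
    by_contra hcon
    have h1 : atomOf F ω ⊆ Aᶜ := atomOf_subset hA.1.compl hcon
    exact (h1 h) hA.2
  exact le_antisymm (atomOf_subset (measurableSet_atomOf F ω) h)
    (atomOf_subset (measurableSet_atomOf F ω') hω)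

lemma eqOn_atomOf {F : MeasurableSpace Ω} {f : Ω → ℝ} (hf : Measurable[F] f)
    {ω ω' : Ω} (h : ω' ∈ atomOf F ω) : f ω' = f ω :=
  atomOf_subset (hf (measurableSet_singleton (f ω))) (by simp : ω ∈ f ⁻¹' {f ω}) h

lemma measurable_of_eqOn_atom [Finite Ω] {F : MeasurableSpace Ω} {f : Ω → ℝ}
    (hc : ∀ ω ω', ω' ∈ atomOf F ω → f ω' = f ω) : Measurable[F] f := by
  intro s _
  have : f ⁻¹' s = ⋃ ω ∈ f ⁻¹' s, atomOf F ω := by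
    ext x
    constructor
    · intro hx
      exact Set.mem_biUnion hx (mem_atomOf F x)
    · rintro hx
      obtain ⟨ω, hω, hxω⟩ := Set.mem_iUnion₂.1 hx
      have := hc ω x hxω
      simpa [Set.mem_preimage, this] using hω
  rw [this]
  exact MeasurableSet.biUnion (Set.to_countable _) (fun ω _ => measurableSet_atomOf F ω)

lemma condSup_eq_sSup_atom [Finite Ω] (F : MeasurableSpace Ω) (Y : Ω → ℝ) (ω : Ω) :
    condSup F Y ω = sSup (Y '' atomOf F ω) := by
  have hmem : sSup (Y '' atomOf F ω) ∈
      {r | ∃ A : Set Ω, MeasurableSet[F] A ∧ ω ∈ A ∧ r = sSup (Y '' A)} :=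
    ⟨atomOf F ω, measurableSet_atomOf F ω, mem_atomOf F ω, rfl⟩
  have hlb : ∀ r ∈ {r | ∃ A : Set Ω, MeasurableSet[F] A ∧ ω ∈ A ∧ r = sSup (Y '' A)},
      sSup (Y '' atomOf F ω) ≤ r := by
    rintro r ⟨A, hA, hωA, rfl⟩
    exact csSup_le_csSup (Set.toFinite _).bddAbove ⟨Y ω, ω, mem_atomOf F ω, rfl⟩
      (Set.image_mono (atomOf_subset hA hωA))
  exact le_antisymm (csInf_le ⟨_, hlb⟩ hmem) (le_csInf ⟨_, hmem⟩ hlb)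

lemma le_condSup [Finite Ω] {F : MeasurableSpace Ω} {Y : Ω → ℝ} {ω ω' : Ω}
    (h : ω' ∈ atomOf F ω) : Y ω' ≤ condSup F Y ω := by
  rw [condSup_eq_sSup_atom]
  exact le_csSup (Set.toFinite _).bddAbove ⟨ω', h, rfl⟩

lemma condRange_eqOn_atom [Finite Ω] {F : MeasurableSpace Ω} {Y : Ω → ℝ} {ω ω' : Ω}
    (h : ω' ∈ atomOf F ω) : condRange F Y ω' = condRange F Y ω := by
  unfold condRange
  rw [condSup_eq_sSup_atom, condSup_eq_sSup_atom, condSup_eq_sSup_atom, condSup_eq_sSup_atom,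
    atomOf_eq_of_mem h]

lemma measurable_condRange [Finite Ω] (F : MeasurableSpace Ω) (Y : Ω → ℝ) :
    Measurable[F] (condRange F Y) :=
  measurable_of_eqOn_atom (fun _ _ h => condRange_eqOn_atom h)

lemma condRange_neg [Finite Ω] (F : MeasurableSpace Ω) (Y : Ω → ℝ) :
    condRange F (fun ω => -(Y ω)) = condRange F Y := by
  funext ω
  unfold condRange
  simp only [neg_neg]
  rw [add_comm]

lemma integrable_fin [Fintype Ω] [MeasurableSpace Ω] (μ : Measure Ω) [IsFiniteMeasure μ]
    {f : Ω → ℝ} (hf : Measurable f) : Integrable f μ := by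
  obtain ⟨C, hC⟩ := (Set.finite_range (fun ω => ‖f ω‖)).bddAbove
  refine ⟨hf.aestronglyMeasurable, ?_⟩
  exact HasFiniteIntegral.of_bounded (C := C)
    (Filter.Eventually.of_forall (fun ω => hC ⟨ω, rfl⟩))

lemma hoeffding_core {p : ℝ} (hp0 : 0 ≤ p) (hp1 : p ≤ 1) (h : ℝ) :
    (1 - p) * Real.exp (-p * h) + p * Real.exp ((1 - p) * h)
      ≤ Real.exp (h ^ 2 / 8) := by
  have hF : ∀ x : ℝ, 0 < (1 - p) + p * Real.exp x := by
    intro x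
    rcases lt_or_eq_of_le hp1 with h1 | h1
    · have := Real.exp_pos x
      nlinarith
    · have := Real.exp_pos x
      nlinarith
  -- φ h = log F h, goal: F h ≤ exp (p h + h²/8)
  set F : ℝ → ℝ := fun x => (1 - p) + p * Real.exp x with hFdef
  set φ : ℝ → ℝ := fun x => Real.log (F x) with hφdef
  set φ' : ℝ → ℝ := fun x => p * Real.exp x / F x with hφ'def
  have hdφ : ∀ x, HasDerivAt φ (φ' x) x := by
    intro x
    have h1 : HasDerivAt F (p * Real.exp x) x := by
      exact ((Real.hasDerivAt_exp x).const_mul p).const_add (1 - p)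
    exact h1.log (hF x).ne'
  have hdφ' : ∀ x, HasDerivAt φ' (p * Real.exp x * (1 - p) / (F x)^2) x := by
    intro x
    have h1 : HasDerivAt F (p * Real.exp x) x := by
      exact ((Real.hasDerivAt_exp x).const_mul p).const_add (1 - p)
    have h2 : HasDerivAt (fun y => p * Real.exp y) (p * Real.exp x) x :=
      (Real.hasDerivAt_exp x).const_mul p
    have h3 := h2.div h1 (hF x).ne'
    refine h3.congr_deriv ?_
    have := (hF x).ne'
    field_simp
    ring
  have hφ''le : ∀ x, p * Real.exp x * (1 - p) / (F x)^2 ≤ 1/4 := by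
    intro x
    have hFpos := hF x
    rw [div_le_iff₀ (by positivity)]
    nlinarith [sq_nonneg ((1 - p) - p * Real.exp x)]
  -- ψ x = x/4 + p - φ' x is monotone, ψ 0 = 0
  set ψ : ℝ → ℝ := fun x => x/4 + p - φ' x with hψdef
  have hdψ : ∀ x, HasDerivAt ψ (1/4 - p * Real.exp x * (1 - p) / (F x)^2) x := by
    intro x
    exact ((hasDerivAt_id x).div_const 4 |>.add_const p).sub (hdφ' x)
  have hψmono : Monotone ψ := by
    apply monotone_of_hasDerivAt_nonneg hdψ
    intro x
    have := hφ''le x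
    simp only [Pi.zero_apply]
    linarith
  have hψ0 : ψ 0 = 0 := by
    simp [hψdef, hφ'def, hFdef]
  -- χ x = p x + x²/8 - φ x ; χ 0 = 0 ; deriv = ψ
  set χ : ℝ → ℝ := fun x => p * x + x^2/8 - φ x with hχdef
  have hdχ : ∀ x, HasDerivAt χ (ψ x) x := by
    intro x
    have h1 : HasDerivAt (fun y : ℝ => p * y + y^2/8) (p + 2 * x / 8) x := by
      have := ((hasDerivAt_id x).const_mul p).add (((hasDerivAt_pow 2 x)).div_const 8)
      exact this.congr_deriv (by simp)
    have := h1.sub (hdφ x)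
    refine this.congr_deriv ?_
    simp only [hψdef]
    ring
  have hχ0 : χ 0 = 0 := by
    simp [hχdef, hφdef, hFdef]
  have hχnonneg : ∀ x, 0 ≤ χ x := by
    intro x
    rcases le_or_gt 0 x with hx | hx
    · have hmono : MonotoneOn χ (Set.Ici 0) := by
        apply monotoneOn_of_hasDerivWithinAt_nonneg (convex_Ici 0)
          (fun y _ => (hdχ y).continuousAt.continuousWithinAt)
          (fun y _ => (hdχ y).hasDerivWithinAt)
        intro y hy
        rw [interior_Ici] at hy
        have : ψ 0 ≤ ψ y := hψmono (le_of_lt hy)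
        linarith [hψ0 ▸ this]
      have := hmono (Set.self_mem_Ici) (Set.mem_Ici.2 hx) hx
      linarith [hχ0 ▸ this]
    · have hanti : AntitoneOn χ (Set.Iic 0) := by
        apply antitoneOn_of_hasDerivWithinAt_nonpos (convex_Iic 0)
          (fun y _ => (hdχ y).continuousAt.continuousWithinAt)
          (fun y _ => (hdχ y).hasDerivWithinAt)
        intro y hy
        rw [interior_Iic] at hy
        have : ψ y ≤ ψ 0 := hψmono (le_of_lt hy)
        linarith [hψ0 ▸ this]
      have := hanti (Set.mem_Iic.2 hx.le) (Set.self_mem_Iic) hx.le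
      linarith [hχ0 ▸ this]
  -- conclude
  have hkey : F h ≤ Real.exp (p * h + h^2/8) := by
    have h1 : φ h ≤ p * h + h^2/8 := by have := hχnonneg h; simp [hχdef] at this; linarith
    calc F h = Real.exp (φ h) := (Real.exp_log (hF h)).symm
    _ ≤ _ := Real.exp_le_exp.2 h1
  have : (1 - p) * Real.exp (-p * h) + p * Real.exp ((1 - p) * h)
      = Real.exp (-p * h) * F h := by
    simp only [hFdef]
    rw [mul_add, show (1-p)*h = -p*h + h by ring, Real.exp_add]
    ring
  rw [this]
  calc Real.exp (-p*h) * F h ≤ Real.exp (-p*h) * Real.exp (p * h + h^2/8) := by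
        exact mul_le_mul_of_nonneg_left hkey (Real.exp_pos _).le
  _ = Real.exp (h^2/8) := by rw [← Real.exp_add]; ring_nf

lemma atom_hoeffding [Fintype Ω] [mΩ : MeasurableSpace Ω] (μ : Measure Ω) [IsFiniteMeasure μ]
    {A : Set Ω} (hA : MeasurableSet A) {X : Ω → ℝ} (hX : Measurable X)
    (hzero : ∫ ω in A, X ω ∂μ = 0) {a b lam : ℝ}
    (hab : ∀ ω ∈ A, a ≤ X ω ∧ X ω ≤ b) :
    ∫ ω in A, Real.exp (lam * X ω) ∂μ ≤ (μ A).toReal * Real.exp (lam^2 * (b-a)^2 / 8) := by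
  rcases eq_or_ne (μ A) 0 with hμA | hμA
  · rw [Measure.restrict_eq_zero.2 hμA]
    simp [hμA]
  have hμpos : 0 < (μ A).toReal := ENNReal.toReal_pos hμA (measure_ne_top μ A)
  have hXint : Integrable X μ := integrable_fin μ hX
  have hconst : ∀ r : ℝ, ∫ _ in A, r ∂μ = r * (μ A).toReal := by
    intro r; rw [setIntegral_const, smul_eq_mul, measureReal_def]; ring
  have ha0 : a * (μ A).toReal ≤ 0 := by
    calc a * (μ A).toReal = ∫ _ in A, a ∂μ := (hconst a).symm
    _ ≤ ∫ ω in A, X ω ∂μ := setIntegral_mono_on (integrableOn_const (measure_ne_top μ A))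
        hXint.integrableOn hA (fun ω hω => (hab ω hω).1)
    _ = 0 := hzero
  have hb0 : 0 ≤ b * (μ A).toReal := by
    calc (0:ℝ) = ∫ ω in A, X ω ∂μ := hzero.symm
    _ ≤ ∫ _ in A, b ∂μ := setIntegral_mono_on hXint.integrableOn
        (integrableOn_const (measure_ne_top μ A)) hA (fun ω hω => (hab ω hω).2)
    _ = b * (μ A).toReal := hconst b
  have ha : a ≤ 0 := by nlinarith
  have hb : 0 ≤ b := by nlinarith
  rcases le_or_gt (b - a) 0 with hc | hc
  · -- then a = b = 0 and X = 0 on A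
    have hae : a = 0 := by linarith
    have hbe : b = 0 := by linarith
    have : ∫ ω in A, Real.exp (lam * X ω) ∂μ = ∫ _ in A, (1:ℝ) ∂μ := by
      refine setIntegral_congr_fun hA (fun ω hω => ?_)
      have h1 := (hab ω hω).1
      have h2 := (hab ω hω).2
      have : X ω = 0 := le_antisymm (hbe ▸ h2) (hae ▸ h1)
      simp [this]
    rw [this, hconst]
    have : (1:ℝ) ≤ Real.exp (lam^2 * (b-a)^2/8) := Real.one_le_exp (by positivity)
    nlinarith
  -- main case
  set c : ℝ := b - a with hcdef
  set K1 : ℝ := (b * Real.exp (lam * a) - a * Real.exp (lam * b)) / c with hK1def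
  set K2 : ℝ := (Real.exp (lam * b) - Real.exp (lam * a)) / c with hK2def
  have hpt : ∀ ω ∈ A, Real.exp (lam * X ω) ≤ K1 + K2 * X ω := by
    intro ω hω
    obtain ⟨h1, h2⟩ := hab ω hω
    have w1 : (0:ℝ) ≤ (b - X ω)/c := div_nonneg (by linarith) hc.le
    have w2 : (0:ℝ) ≤ (X ω - a)/c := div_nonneg (by linarith) hc.le
    have wsum : (b - X ω)/c + (X ω - a)/c = 1 := by
      rw [← add_div, div_eq_one_iff_eq hc.ne']; rw [hcdef]; ring
    have hcvx := convexOn_exp.2 (Set.mem_univ (lam * a)) (Set.mem_univ (lam * b)) w1 w2 wsum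
    simp only [smul_eq_mul] at hcvx
    have harg : (b - X ω)/c * (lam * a) + (X ω - a)/c * (lam * b) = lam * X ω := by
      field_simp; rw [hcdef]; ring
    rw [harg] at hcvx
    calc Real.exp (lam * X ω)
        ≤ (b - X ω)/c * Real.exp (lam * a) + (X ω - a)/c * Real.exp (lam * b) := hcvx
    _ = K1 + K2 * X ω := by rw [hK1def, hK2def]; field_simp; ring
  have hint : ∫ ω in A, Real.exp (lam * X ω) ∂μ ≤ K1 * (μ A).toReal := by
    calc ∫ ω in A, Real.exp (lam * X ω) ∂μ
        ≤ ∫ ω in A, (K1 + K2 * X ω) ∂μ := by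
          refine setIntegral_mono_on ?_ ?_ hA hpt
          · exact (integrable_fin μ (by exact (hX.const_mul lam).exp)).integrableOn
          · exact (integrable_fin μ (by exact (hX.const_mul K2).const_add K1)).integrableOn
    _ = K1 * (μ A).toReal + K2 * ∫ ω in A, X ω ∂μ := by
          rw [integral_add (show Integrable (fun _ : Ω => K1) (μ.restrict A) from
            integrableOn_const (measure_ne_top μ A))
            ((hXint.const_mul K2).integrableOn), hconst, integral_const_mul]
    _ = K1 * (μ A).toReal := by rw [hzero]; ring
  have hK1 : K1 ≤ Real.exp (lam^2 * c^2 / 8) := by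
    have hp0 : (0:ℝ) ≤ -a/c := div_nonneg (by linarith) hc.le
    have hp1 : -a/c ≤ 1 := by rw [div_le_one hc]; linarith
    have hcore := hoeffding_core hp0 hp1 (lam * c)
    have h1 : 1 - -a/c = b/c := by field_simp; rw [hcdef]; ring
    have h2 : -(-a/c) * (lam * c) = lam * a := by field_simp
    have h3 : (1 - -a/c) * (lam * c) = lam * b := by field_simp; rw [hcdef]; ring
    have h4 : (lam * c)^2/8 = lam^2 * c^2/8 := by ring
    rw [h2, h3, h4, h1] at hcore
    calc K1 = b/c * Real.exp (lam * a) + -a/c * Real.exp (lam * b) := by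
          rw [hK1def]; field_simp; ring
    _ ≤ _ := hcore
  calc ∫ ω in A, Real.exp (lam * X ω) ∂μ ≤ K1 * (μ A).toReal := hint
  _ ≤ Real.exp (lam^2 * c^2/8) * (μ A).toReal := by nlinarith
  _ = (μ A).toReal * Real.exp (lam^2 * (b-a)^2/8) := by rw [hcdef]; ring

lemma onesided [Fintype Ω] [mΩ : MeasurableSpace Ω] (μ : Measure Ω) [IsProbabilityMeasure μ]
    (t : ℕ) (ℱ : ℕ → MeasurableSpace Ω) (hmono : Monotone ℱ) (hle : ∀ j, ℱ j ≤ mΩ)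
    (Y : ℕ → Ω → ℝ) (hYmeas : ∀ j, Measurable[ℱ j] (Y j))
    (hmart : ∀ k, k + 1 ≤ t → ∀ A : Set Ω, MeasurableSet[ℱ k] A →
      ∫ ω in A, Y (k+1) ω ∂μ = ∫ ω in A, Y k ω ∂μ)
    (u r2 : ℝ) (hu : 0 < u) (hr2 : 0 < r2) :
    (μ ({ω | u ≤ Y t ω - Y 0 ω} ∩
        {ω | (∑ j ∈ Finset.Icc 1 t, condRange (ℱ (j-1)) (Y j) ω ^ 2) ≤ r2})).toReal
      ≤ Real.exp (-2 * u^2 / r2) := by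
  classical
  have hYm : ∀ j, Measurable[mΩ] (Y j) := fun j => (hYmeas j).mono (hle j) le_rfl
  have hranm : ∀ j : ℕ, Measurable[mΩ] (condRange (ℱ (j-1)) (Y j)) :=
    fun j => (measurable_condRange (ℱ (j-1)) (Y j)).mono (hle (j-1)) le_rfl
  set lam : ℝ := 4 * u / r2 with hlamdef
  have hlam : 0 < lam := by positivity
  set W : ℕ → Ω → ℝ := fun k ω => Real.exp (lam * (Y k ω - Y 0 ω)
      - lam^2/8 * ∑ j ∈ Finset.Icc 1 k, condRange (ℱ (j-1)) (Y j) ω ^ 2) with hWdef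
  have hWmeas : ∀ k, Measurable[mΩ] (W k) := by
    intro k
    apply Real.measurable_exp.comp
    exact (((hYm k).sub (hYm 0)).const_mul lam).sub
      ((Finset.measurable_sum _ (fun j _ => (hranm j).pow_const 2)).const_mul (lam^2/8))
  have hWint : ∀ k, Integrable (W k) μ := fun k => integrable_fin μ (hWmeas k)
  -- the key inductive bound
  have key : ∀ k, k ≤ t → ∫ ω, W k ω ∂μ ≤ 1 := by
    intro k
    induction k with
    | zero =>
      intro _
      have : W 0 = fun _ => (1:ℝ) := by
        funext ω; simp [hWdef]
      rw [this, integral_const]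
      simp
    | succ k ih =>
      intro hk1
      have hk : k ≤ t := Nat.le_of_succ_le hk1
      set 𝒜 : Finset (Set Ω) := Finset.univ.image (atomOf (ℱ k)) with h𝒜
      have hAmeas : ∀ A ∈ 𝒜, MeasurableSet[mΩ] A := by
        intro A hA
        obtain ⟨ω0, _, rfl⟩ := Finset.mem_image.1 hA
        exact hle k _ (measurableSet_atomOf (ℱ k) ω0)
      have hdisj : (↑𝒜 : Set (Set Ω)).Pairwise (Function.onFun Disjoint (id : Set Ω → Set Ω)) := by
        intro A hA B hB hne
        obtain ⟨ωa, _, rfl⟩ := Finset.mem_image.1 hA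
        obtain ⟨ωb, _, rfl⟩ := Finset.mem_image.1 hB
        refine Set.disjoint_left.2 (fun x hxA hxB => hne ?_)
        rw [← atomOf_eq_of_mem hxA, ← atomOf_eq_of_mem hxB]
      have hcover : (⋃ A ∈ 𝒜, (id A : Set Ω)) = Set.univ := by
        ext x
        simp only [Set.mem_univ, iff_true, Set.mem_iUnion, id]
        exact ⟨atomOf (ℱ k) x, by simp [h𝒜], mem_atomOf (ℱ k) x⟩
      have hdecomp : ∀ f : Ω → ℝ, Measurable f →
          ∫ ω, f ω ∂μ = ∑ A ∈ 𝒜, ∫ ω in A, f ω ∂μ := by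
        intro f hf
        rw [← setIntegral_univ, ← hcover]
        exact integral_biUnion_finset 𝒜 hAmeas hdisj
          (fun A _ => (integrable_fin μ hf).integrableOn)
      have hatom : ∀ A ∈ 𝒜, ∫ ω in A, W (k+1) ω ∂μ ≤ ∫ ω in A, W k ω ∂μ := by
        intro A hA
        obtain ⟨ω0, _, rfl⟩ := Finset.mem_image.1 hA
        have hAm : MeasurableSet[(ℱ k)] (atomOf (ℱ k) ω0) := measurableSet_atomOf (ℱ k) ω0
        have hAmΩ : MeasurableSet[mΩ] (atomOf (ℱ k) ω0) := hle k _ hAm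
        have hYk : ∀ ω ∈ atomOf (ℱ k) ω0, Y k ω = Y k ω0 :=
          fun ω hω => eqOn_atomOf (hYmeas k) hω
        have hY0 : ∀ ω ∈ atomOf (ℱ k) ω0, Y 0 ω = Y 0 ω0 :=
          fun ω hω => eqOn_atomOf ((hYmeas 0).mono (hmono (Nat.zero_le k)) le_rfl) hω
        have hranj : ∀ j ∈ Finset.Icc 1 k, ∀ ω ∈ atomOf (ℱ k) ω0,
            condRange (ℱ (j-1)) (Y j) ω = condRange (ℱ (j-1)) (Y j) ω0 := by
          intro j hj ω hω
          have hjk : ℱ (j-1) ≤ (ℱ k) := hmono (by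
            have := (Finset.mem_Icc.1 hj).2; omega)
          exact eqOn_atomOf ((measurable_condRange _ _).mono hjk le_rfl) hω
        set c : ℝ := condRange (ℱ k) (Y (k+1)) ω0 with hcdef
        have hransucc : ∀ ω ∈ atomOf (ℱ k) ω0, condRange (ℱ ((k+1)-1)) (Y (k+1)) ω = c := by
          intro ω hω
          simp only [Nat.add_sub_cancel]
          exact eqOn_atomOf (measurable_condRange (ℱ k) (Y (k+1))) hω
        have hWk_const : ∀ ω ∈ atomOf (ℱ k) ω0, W k ω = W k ω0 := by
          intro ω hω
          simp only [hWdef]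
          rw [hYk ω hω, hY0 ω hω, Finset.sum_congr rfl (fun j hj => by rw [hranj j hj ω hω])]
        set X : Ω → ℝ := fun ω => Y (k+1) ω - Y k ω with hXdef
        have hWsucc : ∀ ω ∈ atomOf (ℱ k) ω0,
            W (k+1) ω = (W k ω0 * Real.exp (-(lam^2 * c^2/8))) * Real.exp (lam * X ω) := by
          intro ω hω
          simp only [hWdef, hXdef]
          rw [Finset.sum_Icc_succ_top (Nat.le_add_left 1 k),
            Finset.sum_congr rfl (fun j hj => by rw [hranj j hj ω hω]),
            hransucc ω hω, hY0 ω hω, ← Real.exp_add, ← Real.exp_add]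
          congr 1
          have := hYk ω hω
          ring_nf
          rw [hYk ω hω]
          ring
        set M : ℝ := condSup (ℱ k) (Y (k+1)) ω0 with hMdef
        set N : ℝ := condSup (ℱ k) (fun ω' => -(Y (k+1) ω')) ω0 with hNdef
        have hcMN : c = M + N := rfl
        have hbounds : ∀ ω ∈ atomOf (ℱ k) ω0,
            -N - Y k ω0 ≤ X ω ∧ X ω ≤ M - Y k ω0 := by
          intro ω hω
          have h1 : Y (k+1) ω ≤ M := le_condSup hω
          have h2 : -(Y (k+1) ω) ≤ N := le_condSup (Y := fun ω' => -(Y (k+1) ω')) hω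
          have h3 : Y k ω = Y k ω0 := hYk ω hω
          constructor <;> (simp only [hXdef]; rw [h3]) <;> linarith
        have hXzero : ∫ ω in atomOf (ℱ k) ω0, X ω ∂μ = 0 := by
          simp only [hXdef]
          rw [integral_sub ((integrable_fin μ (hYm (k+1))).integrableOn)
            ((integrable_fin μ (hYm k)).integrableOn), hmart k hk1 _ hAm, sub_self]
        have hhoeff := atom_hoeffding (lam := lam) μ hAmΩ ((hYm (k+1)).sub (hYm k)) hXzero hbounds
        have hba : (M - Y k ω0) - (-N - Y k ω0) = c := by rw [hcMN]; ring
        rw [hba] at hhoeff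
        have hWconst_pos : (0:ℝ) ≤ W k ω0 * Real.exp (-(lam^2 * c^2/8)) := by positivity
        calc ∫ ω in atomOf (ℱ k) ω0, W (k+1) ω ∂μ
            = (W k ω0 * Real.exp (-(lam^2 * c^2/8))) *
              ∫ ω in atomOf (ℱ k) ω0, Real.exp (lam * X ω) ∂μ := by
              rw [← integral_const_mul]
              exact setIntegral_congr_fun hAmΩ hWsucc
        _ ≤ (W k ω0 * Real.exp (-(lam^2 * c^2/8))) *
              ((μ (atomOf (ℱ k) ω0)).toReal * Real.exp (lam^2 * c^2/8)) :=
              mul_le_mul_of_nonneg_left hhoeff hWconst_pos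
        _ = W k ω0 * (μ (atomOf (ℱ k) ω0)).toReal := by
              rw [mul_comm ((μ (atomOf (ℱ k) ω0)).toReal) (Real.exp (lam^2 * c^2/8))]
              rw [show W k ω0 * Real.exp (-(lam^2 * c^2/8)) *
                (Real.exp (lam^2 * c^2/8) * (μ (atomOf (ℱ k) ω0)).toReal)
                = W k ω0 * (Real.exp (-(lam^2 * c^2/8)) * Real.exp (lam^2 * c^2/8)) *
                  (μ (atomOf (ℱ k) ω0)).toReal by ring, ← Real.exp_add]
              simp
        _ = ∫ ω in atomOf (ℱ k) ω0, W k ω ∂μ := by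
              rw [setIntegral_congr_fun hAmΩ hWk_const, setIntegral_const, smul_eq_mul, measureReal_def]
              ring
      calc ∫ ω, W (k+1) ω ∂μ = ∑ A ∈ 𝒜, ∫ ω in A, W (k+1) ω ∂μ :=
            hdecomp _ (hWmeas (k+1))
      _ ≤ ∑ A ∈ 𝒜, ∫ ω in A, W k ω ∂μ := Finset.sum_le_sum hatom
      _ = ∫ ω, W k ω ∂μ := (hdecomp _ (hWmeas k)).symm
      _ ≤ 1 := ih hk
  -- Chernoff step
  set E : Set Ω := {ω | u ≤ Y t ω - Y 0 ω} ∩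
      {ω | (∑ j ∈ Finset.Icc 1 t, condRange (ℱ (j-1)) (Y j) ω ^ 2) ≤ r2} with hEdef
  have hEmeas : MeasurableSet E := by
    apply MeasurableSet.inter
    · exact measurableSet_le measurable_const ((hYm t).sub (hYm 0))
    · exact measurableSet_le (Finset.measurable_sum _ (fun j _ => (hranm j).pow_const 2))
        measurable_const
  have hWlower : ∀ ω ∈ E, Real.exp (2 * u^2 / r2) ≤ W t ω := by
    intro ω hω
    obtain ⟨h1, h2⟩ := hω
    simp only [Set.mem_setOf_eq] at h1 h2
    simp only [hWdef]
    apply Real.exp_le_exp.2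
    have e1 : lam * u ≤ lam * (Y t ω - Y 0 ω) := mul_le_mul_of_nonneg_left h1 hlam.le
    have e2 : lam^2/8 * (∑ j ∈ Finset.Icc 1 t, condRange (ℱ (j-1)) (Y j) ω ^ 2)
        ≤ lam^2/8 * r2 := mul_le_mul_of_nonneg_left h2 (by positivity)
    have e3 : lam * u - lam^2/8 * r2 = 2 * u^2 / r2 := by
      rw [hlamdef]; field_simp; ring
    linarith
  have hmain : Real.exp (2 * u^2 / r2) * (μ E).toReal ≤ 1 := by
    calc Real.exp (2 * u^2 / r2) * (μ E).toReal
        = ∫ _ in E, Real.exp (2 * u^2 / r2) ∂μ := by rw [setIntegral_const, smul_eq_mul, measureReal_def]; ring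
    _ ≤ ∫ ω in E, W t ω ∂μ := setIntegral_mono_on
        (integrableOn_const (measure_ne_top μ E)) ((hWint t).integrableOn)
        hEmeas hWlower
    _ ≤ ∫ ω, W t ω ∂μ := setIntegral_le_integral (hWint t)
        (Filter.Eventually.of_forall (fun ω => (Real.exp_pos _).le))
    _ ≤ 1 := key t le_rfl
  have hqpos := Real.exp_pos (2 * u^2 / r2)
  rw [show -2 * u^2 / r2 = -(2 * u^2 / r2) by ring, Real.exp_neg, ← one_div]
  rw [le_div_iff₀ hqpos]
  linarith [hmain]

/-- McDiarmid's martingale bounded-differences inequality (Theorem 3.14 of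
McDiarmid 1998): a bounded random variable on a finite probability space
deviates from its mean by `u` with probability at most `2 exp(-2u²/r̂²)`, where
`r̂²` bounds the sum of squared conditional ranges of the Doob martingale. -/
theorem stmt7 [Fintype Ω] [mΩ : MeasurableSpace Ω]
    (μ : Measure Ω) [IsProbabilityMeasure μ]
    (t : ℕ) (ℱ : ℕ → MeasurableSpace Ω) (hmono : Monotone ℱ)
    (hle : ∀ j, ℱ j ≤ mΩ) (hF0 : ℱ 0 = ⊥)
    (Z : Ω → ℝ) (hZmeas : Measurable[ℱ t] Z)
    (m : ℝ) (hm : m = ∫ ω, Z ω ∂μ)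
    (R2 : Ω → ℝ)
    (hR2 : R2 = fun ω => ∑ j ∈ Finset.Icc 1 t,
      condRange (ℱ (j - 1)) (μ[Z|ℱ j]) ω ^ 2) :
    (∀ u : ℝ, 0 ≤ u →
      (μ {ω | u ≤ |Z ω - m|}).toReal
        ≤ 2 * Real.exp (-2 * u ^ 2 / (⨆ ω, R2 ω))) ∧
    ∀ u : ℝ, 0 ≤ u → ∀ r2 : ℝ,
      (μ ({ω | u ≤ |Z ω - m|} ∩ {ω | R2 ω ≤ r2})).toReal
        ≤ 2 * Real.exp (-2 * u ^ 2 / r2) := by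
  have hZm : Measurable[mΩ] Z := hZmeas.mono (hle t) le_rfl
  have hZint : Integrable Z μ := integrable_fin μ hZm
  set Y : ℕ → Ω → ℝ := fun j => μ[Z|ℱ j] with hYdef
  have hYt : Y t = Z :=
    condExp_of_stronglyMeasurable (hle t) hZmeas.stronglyMeasurable hZint
  have hY0 : Y 0 = fun _ => m := by
    simp only [hYdef, hF0, condExp_bot, hm]
  have hYmeas : ∀ j, Measurable[ℱ j] (Y j) := fun j =>
    stronglyMeasurable_condExp.measurable
  have hmart : ∀ k, k + 1 ≤ t → ∀ A : Set Ω, MeasurableSet[ℱ k] A →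
      ∫ ω in A, Y (k+1) ω ∂μ = ∫ ω in A, Y k ω ∂μ := by
    intro k _ A hAk
    have hA1 : MeasurableSet[ℱ (k+1)] A := hmono (Nat.le_succ k) A hAk
    simp only [hYdef]
    rw [setIntegral_condExp (hle (k+1)) hZint hA1,
      setIntegral_condExp (hle k) hZint hAk]
  -- the general statement (second conjunct)
  have main : ∀ u : ℝ, 0 ≤ u → ∀ r2 : ℝ,
      (μ ({ω | u ≤ |Z ω - m|} ∩ {ω | R2 ω ≤ r2})).toReal
        ≤ 2 * Real.exp (-2 * u ^ 2 / r2) := by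
    intro u hu r2
    have htoReal_le_one : ∀ S : Set Ω, (μ S).toReal ≤ 1 := by
      intro S
      have h1 : μ S ≤ 1 := prob_le_one
      calc (μ S).toReal ≤ (1 : ENNReal).toReal :=
        ENNReal.toReal_mono (by simp) h1
      _ = 1 := by simp
    rcases eq_or_lt_of_le hu with hu0 | hupos
    · -- u = 0 : trivial
      have : (0:ℝ) ≤ -2 * u^2 / r2 := by rw [← hu0]; simp
      have h2 : (1:ℝ) ≤ 2 * Real.exp (-2 * u^2 / r2) := by
        have := Real.one_le_exp this
        linarith
      exact (htoReal_le_one _).trans h2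
    rcases le_or_gt r2 0 with hr2 | hr2pos
    · -- r2 ≤ 0 : trivial
      have : (0:ℝ) ≤ -2 * u^2 / r2 := by
        rw [div_nonneg_iff]
        exact Or.inr ⟨by nlinarith, hr2⟩
      have h2 : (1:ℝ) ≤ 2 * Real.exp (-2 * u^2 / r2) := by
        have := Real.one_le_exp this
        linarith
      exact (htoReal_le_one _).trans h2
    -- main case : u > 0, r2 > 0
    have hplus := onesided μ t ℱ hmono hle Y hYmeas hmart u r2 hupos hr2pos
    have hmart' : ∀ k, k + 1 ≤ t → ∀ A : Set Ω, MeasurableSet[ℱ k] A →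
        ∫ ω in A, (fun j ω => -(Y j ω)) (k+1) ω ∂μ
          = ∫ ω in A, (fun j ω => -(Y j ω)) k ω ∂μ := by
      intro k hk A hAk
      simp only [integral_neg]
      rw [hmart k hk A hAk]
    have hminus := onesided μ t ℱ hmono hle (fun j ω => -(Y j ω))
      (fun j => (hYmeas j).neg) hmart' u r2 hupos hr2pos
    -- rewrite the events
    have hsetplus : {ω | u ≤ Y t ω - Y 0 ω} ∩
        {ω | (∑ j ∈ Finset.Icc 1 t, condRange (ℱ (j-1)) (Y j) ω ^ 2) ≤ r2}
        = {ω | u ≤ Z ω - m} ∩ {ω | R2 ω ≤ r2} := by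
      rw [hYt, hY0, hR2]
    have hsetminus : {ω | u ≤ (fun j ω => -(Y j ω)) t ω - (fun j ω => -(Y j ω)) 0 ω} ∩
        {ω | (∑ j ∈ Finset.Icc 1 t,
          condRange (ℱ (j-1)) ((fun j ω => -(Y j ω)) j) ω ^ 2) ≤ r2}
        = {ω | u ≤ m - Z ω} ∩ {ω | R2 ω ≤ r2} := by
      have hcr : ∀ j : ℕ, condRange (ℱ (j-1)) (fun ω => -(Y j ω)) = condRange (ℱ (j-1)) (Y j) :=
        fun j => condRange_neg (ℱ (j-1)) (Y j)
      ext ω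
      simp only [Set.mem_inter_iff, Set.mem_setOf_eq, hcr, hYt, hY0, hR2]
      constructor
      · rintro ⟨h1, h2⟩; exact ⟨by linarith, h2⟩
      · rintro ⟨h1, h2⟩; exact ⟨by linarith, h2⟩
    rw [hsetplus] at hplus
    rw [hsetminus] at hminus
    -- union bound
    have hsub : {ω | u ≤ |Z ω - m|} ∩ {ω | R2 ω ≤ r2} ⊆
        ({ω | u ≤ Z ω - m} ∩ {ω | R2 ω ≤ r2}) ∪
        ({ω | u ≤ m - Z ω} ∩ {ω | R2 ω ≤ r2}) := by
      intro ω hω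
      simp only [Set.mem_inter_iff, Set.mem_setOf_eq] at hω
      obtain ⟨h1, h2⟩ := hω
      simp only [Set.mem_union, Set.mem_inter_iff, Set.mem_setOf_eq]
      rcases le_abs.1 h1 with h | h
      · exact Or.inl ⟨h, h2⟩
      · exact Or.inr ⟨by linarith, h2⟩
    have hμ : μ ({ω | u ≤ |Z ω - m|} ∩ {ω | R2 ω ≤ r2})
        ≤ μ ({ω | u ≤ Z ω - m} ∩ {ω | R2 ω ≤ r2})
          + μ ({ω | u ≤ m - Z ω} ∩ {ω | R2 ω ≤ r2}) :=
      (measure_mono hsub).trans (measure_union_le _ _)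
    have htr : (μ ({ω | u ≤ |Z ω - m|} ∩ {ω | R2 ω ≤ r2})).toReal
        ≤ (μ ({ω | u ≤ Z ω - m} ∩ {ω | R2 ω ≤ r2})).toReal
          + (μ ({ω | u ≤ m - Z ω} ∩ {ω | R2 ω ≤ r2})).toReal := by
      rw [← ENNReal.toReal_add (measure_ne_top μ _) (measure_ne_top μ _)]
      exact ENNReal.toReal_mono
        (ENNReal.add_ne_top.2 ⟨measure_ne_top μ _, measure_ne_top μ _⟩) hμ
    calc (μ ({ω | u ≤ |Z ω - m|} ∩ {ω | R2 ω ≤ r2})).toReal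
        ≤ _ + _ := htr
    _ ≤ Real.exp (-2 * u^2 / r2) + Real.exp (-2 * u^2 / r2) := add_le_add hplus hminus
    _ = 2 * Real.exp (-2 * u^2 / r2) := by ring
  refine ⟨?_, main⟩
  intro u hu
  have hcov : {ω | R2 ω ≤ ⨆ ω, R2 ω} = Set.univ := by
    refine Set.eq_univ_iff_forall.2 (fun ω => ?_)
    exact le_ciSup (Set.finite_range R2).bddAbove ω
  have := main u hu (⨆ ω, R2 ω)
  rwa [hcov, Set.inter_univ] at this
end
end

section
/- For the Curie-Weiss (mean-field) Ising Glauber dynamics on n vertices with inverse temperature β < 1, the one-step Wasserstein contraction d_W(δ_σ P, δ_{σ'} P) ≤ 1 − (1−β)/n holds for all configurations σ, σ' ∈ {−1,1}^n differing in exactly one coordinate, where the metric is the Hamming distance. Consequently, the Gibbs measure π satisfies: for some constants c, C > 0, for all n, all u > 0, and all functions f : {−1,1}^n → ℝ that are 1-Lipschitz with respect to Hamming distance, π(|f − π(f)| ≥ u) ≤ C·e^{−u²/(c n)}. -/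
open scoped BigOperators Classical
open Filter

noncomputable section

variable {S : Type*}

/-- `f` is 1-Lipschitz with respect to `d`. -/
def IsLip (d : S → S → ℝ) (f : S → ℝ) : Prop := ∀ x y, |f x - f y| ≤ d x y

/-- Integral of `f` against a probability mass function `μ`. -/
def integ (μ f : S → ℝ) : ℝ := ∑' x, μ x * f x

/-- Wasserstein (dual Lipschitz) distance between two pmfs on `S`. -/
def dW (d : S → S → ℝ) (μ ν : S → ℝ) : ℝ :=
  sSup {r | ∃ f, IsLip d f ∧ r = |integ μ f - integ ν f|}

/-- One step of the kernel `P` applied to a pmf `μ`. -/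
def step (P : S → S → ℝ) (μ : S → ℝ) : S → ℝ := fun y => ∑' x, μ x * P x y

/-- `t` steps of the kernel `P`. -/
def kpow (P : S → S → ℝ) (t : ℕ) (μ : S → ℝ) : S → ℝ := (step P)^[t] μ

/-- Dirac mass at `x`. -/
def delta (x : S) : S → ℝ := fun y => if y = x then 1 else 0

/-- Probability of an event under a pmf. -/
def pr (μ : S → ℝ) (A : S → Prop) : ℝ := ∑' x, if A x then μ x else 0

/-- Probability of a path event for the chain with kernel `P` started at `x0`,
run for `t` steps. -/
def pathProb (P : S → S → ℝ) (x0 : S) (t : ℕ)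
    (E : (Fin (t + 1) → S) → Prop) : ℝ :=
  ∑' ω : Fin (t + 1) → S,
    if ω 0 = x0 ∧ E ω then ∏ i : Fin t, P (ω i.castSucc) (ω i.succ) else 0

/-- `P` is a stochastic matrix. -/
def IsStochastic (P : S → S → ℝ) : Prop :=
  (∀ x y, 0 ≤ P x y) ∧ ∀ x, HasSum (P x) 1

/-- `d` is a graph-type metric: zero on the diagonal, symmetric, satisfies
the triangle inequality, and is at least 1 off the diagonal. -/
def IsGraphMetric (d : S → S → ℝ) : Prop :=
  (∀ x, d x x = 0) ∧ (∀ x y, d x y = d y x) ∧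
  (∀ x y z, d x z ≤ d x y + d y z) ∧ (∀ x y, x ≠ y → 1 ≤ d x y)

/-- The transition graph of `P` is locally finite. -/
def LocFin (P : S → S → ℝ) : Prop := ∀ x, {y | 0 < P x y}.Finite

/-- The spin value of a Boolean configuration entry. -/
def spin (b : Bool) : ℝ := if b then 1 else -1

/-- The Curie-Weiss Gibbs measure at inverse temperature `β` on `{-1,1}^n`
(configurations encoded as `Fin n → Bool`), with interaction `J = 1/n`. -/
def gibbs (n : ℕ) (β : ℝ) (σ : Fin n → Bool) : ℝ :=
  Real.exp ((β / n) * ∑ p ∈ Finset.univ.filter (fun p : Fin n × Fin n => p.1 < p.2),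
      spin (σ p.1) * spin (σ p.2)) /
    ∑ τ : Fin n → Bool,
      Real.exp ((β / n) * ∑ p ∈ Finset.univ.filter (fun p : Fin n × Fin n => p.1 < p.2),
        spin (τ p.1) * spin (τ p.2))

/-- Probability that Glauber dynamics resamples the spin at `v` to `+1`. -/
def pPlus (n : ℕ) (β : ℝ) (σ : Fin n → Bool) (v : Fin n) : ℝ :=
  Real.exp (β * ((1 / (n : ℝ)) * ∑ w ∈ Finset.univ.erase v, spin (σ w))) /
    (Real.exp (β * ((1 / (n : ℝ)) * ∑ w ∈ Finset.univ.erase v, spin (σ w))) +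
      Real.exp (-(β * ((1 / (n : ℝ)) * ∑ w ∈ Finset.univ.erase v, spin (σ w)))))

/-- The single-site Glauber dynamics transition matrix for the Curie-Weiss model. -/
def glauber (n : ℕ) (β : ℝ) (σ τ : Fin n → Bool) : ℝ :=
  (1 / n) * ∑ v : Fin n,
    if ∀ w, w ≠ v → τ w = σ w then
      (if τ v then pPlus n β σ v else 1 - pPlus n β σ v)
    else 0

namespace CW

open Finset Real

variable {S : Type*} [Fintype S]

/-- Transfer operator. -/
def Tk (P : S → S → ℝ) (g : S → ℝ) (x : S) : ℝ := ∑ y, P x y * g y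

lemma integ_eq (μ f : S → ℝ) : integ μ f = ∑ x, μ x * f x := tsum_fintype _

lemma step_eq (P : S → S → ℝ) (μ : S → ℝ) (y : S) : step P μ y = ∑ x, μ x * P x y :=
  tsum_fintype _

lemma pr_eq (μ : S → ℝ) (A : S → Prop) : pr μ A = ∑ x, if A x then μ x else 0 :=
  tsum_fintype _

lemma integ_step (P : S → S → ℝ) (μ f : S → ℝ) :
    integ (step P μ) f = ∑ x, μ x * Tk P f x := by
  simp only [integ_eq, step_eq, Tk, Finset.sum_mul, Finset.mul_sum]
  rw [Finset.sum_comm]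
  simp [mul_assoc]

lemma integ_step_delta (P : S → S → ℝ) (σ : S) (f : S → ℝ) :
    integ (step P (delta σ)) f = Tk P f σ := by
  rw [integ_step]
  simp only [delta, ite_mul, one_mul, zero_mul]
  simp

lemma integ_kpow_delta (P : S → S → ℝ) (t : ℕ) (σ : S) (f : S → ℝ) :
    integ (kpow P t (delta σ)) f = (Tk P)^[t] f σ := by
  induction t generalizing f σ with
  | zero => simp [kpow, integ_eq, delta, ite_mul]
  | succ t ih =>
      have h1 : kpow P (t+1) (delta σ) = step P (kpow P t (delta σ)) := by
        rw [kpow, Function.iterate_succ_apply']; rfl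
      rw [h1, integ_step]
      have h2 : ∀ x, Tk P f x = integ (step P (delta x)) f := fun x =>
        (integ_step_delta P x f).symm
      calc ∑ x, kpow P t (delta σ) x * Tk P f x
          = integ (kpow P t (delta σ)) (Tk P f) := (integ_eq _ _).symm
        _ = (Tk P)^[t] (Tk P f) σ := ih _ _
        _ = (Tk P)^[t+1] f σ := by rw [Function.iterate_succ_apply]

lemma Tk_mono {P : S → S → ℝ} (hP : ∀ x y, 0 ≤ P x y) {F G : S → ℝ}
    (h : ∀ y, F y ≤ G y) (x : S) : Tk P F x ≤ Tk P G x :=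
  Finset.sum_le_sum fun y _ => mul_le_mul_of_nonneg_left (h y) (hP x y)

lemma Tk_iter_mono {P : S → S → ℝ} (hP : ∀ x y, 0 ≤ P x y) (t : ℕ) {F G : S → ℝ}
    (h : ∀ y, F y ≤ G y) (x : S) : (Tk P)^[t] F x ≤ (Tk P)^[t] G x := by
  induction t generalizing F G with
  | zero => exact h x
  | succ t ih =>
      rw [Function.iterate_succ_apply, Function.iterate_succ_apply]
      exact ih fun y => Tk_mono hP h y

lemma Tk_const_mul (P : S → S → ℝ) (c : ℝ) (F : S → ℝ) (x : S) :
    Tk P (fun y => c * F y) x = c * Tk P F x := by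
  simp [Tk, Finset.mul_sum]; ring_nf
  exact Finset.sum_congr rfl fun y _ => by ring

lemma Tk_iter_const_mul (P : S → S → ℝ) (c : ℝ) (t : ℕ) (F : S → ℝ) (x : S) :
    (Tk P)^[t] (fun y => c * F y) x = c * (Tk P)^[t] F x := by
  induction t generalizing F x with
  | zero => rfl
  | succ t ih =>
      rw [Function.iterate_succ_apply, Function.iterate_succ_apply]
      have : Tk P (fun y => c * F y) = fun y => c * Tk P F y := by
        funext y; exact Tk_const_mul P c F y
      rw [this]
      exact ih _ _

end CW
namespace CW

open Finset Real

lemma spin_sq (b : Bool) : spin b * spin b = 1 := by cases b <;> simp [spin]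

lemma abs_spin_sub_le (a b : Bool) : |spin a - spin b| ≤ 2 := by
  cases a <;> cases b <;> simp [spin] <;> norm_num

variable {n : ℕ} {β : ℝ}

lemma pPlus_nonneg (σ : Fin n → Bool) (v : Fin n) : 0 ≤ pPlus n β σ v := by
  unfold pPlus; positivity

lemma pPlus_le_one (σ : Fin n → Bool) (v : Fin n) : pPlus n β σ v ≤ 1 := by
  unfold pPlus
  rw [div_le_one (by positivity)]
  nlinarith [Real.exp_pos (-(β * ((1 / (n : ℝ)) * ∑ w ∈ Finset.univ.erase v, spin (σ w))))]

lemma one_sub_pPlus (σ : Fin n → Bool) (v : Fin n) :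
    1 - pPlus n β σ v =
    Real.exp (-(β * ((1 / (n : ℝ)) * ∑ w ∈ Finset.univ.erase v, spin (σ w)))) /
    (Real.exp (β * ((1 / (n : ℝ)) * ∑ w ∈ Finset.univ.erase v, spin (σ w))) +
      Real.exp (-(β * ((1 / (n : ℝ)) * ∑ w ∈ Finset.univ.erase v, spin (σ w))))) := by
  unfold pPlus
  have h1 : (0:ℝ) < Real.exp (β * ((1 / (n : ℝ)) * ∑ w ∈ Finset.univ.erase v, spin (σ w))) +
      Real.exp (-(β * ((1 / (n : ℝ)) * ∑ w ∈ Finset.univ.erase v, spin (σ w)))) := by positivity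
  field_simp
  ring

lemma glauber_nonneg (σ τ : Fin n → Bool) : 0 ≤ glauber n β σ τ := by
  unfold glauber
  apply mul_nonneg (by positivity)
  apply Finset.sum_nonneg
  intro v _
  by_cases h : ∀ w, w ≠ v → τ w = σ w
  · rw [if_pos h]
    by_cases h2 : τ v
    · rw [if_pos h2]; exact pPlus_nonneg σ v
    · rw [if_neg h2]; linarith [pPlus_le_one (β := β) σ v]
  · rw [if_neg h]

lemma hammingDist_le_one_of (σ τ : Fin n → Bool) (v : Fin n)
    (h : ∀ w, w ≠ v → τ w = σ w) : hammingDist σ τ ≤ 1 := by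
  have : ({i | σ i ≠ τ i} : Finset (Fin n)) ⊆ {v} := by
    intro i hi
    simp only [Finset.mem_filter, Finset.mem_univ, true_and, Finset.mem_singleton] at hi ⊢
    by_contra hiv
    exact hi ((h i hiv).symm)
  simpa [hammingDist] using Finset.card_le_card this

lemma glauber_support (σ τ : Fin n → Bool) (h : glauber n β σ τ ≠ 0) :
    hammingDist σ τ ≤ 1 := by
  unfold glauber at h
  have h2 : ∑ v : Fin n, (if ∀ w, w ≠ v → τ w = σ w then
      (if τ v then pPlus n β σ v else 1 - pPlus n β σ v) else 0) ≠ 0 := by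
    intro h0; rw [h0, mul_zero] at h; exact h rfl
  obtain ⟨v, _, hv⟩ := Finset.exists_ne_zero_of_sum_ne_zero h2
  by_cases hc : ∀ w, w ≠ v → τ w = σ w
  · exact hammingDist_le_one_of σ τ v hc
  · exact absurd (if_neg hc) hv

/-- The basic decomposition of the transfer operator of Glauber dynamics. -/
lemma Tk_glauber (f : (Fin n → Bool) → ℝ) (σ : Fin n → Bool) :
    Tk (glauber n β) f σ = (1 / n) * ∑ v : Fin n,
      (pPlus n β σ v * f (Function.update σ v true) +
        (1 - pPlus n β σ v) * f (Function.update σ v false)) := by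
  unfold Tk glauber
  have step1 : ∑ τ : Fin n → Bool, ((1 / (n:ℝ)) * ∑ v : Fin n,
      (if ∀ w, w ≠ v → τ w = σ w then
        (if τ v then pPlus n β σ v else 1 - pPlus n β σ v) else 0)) * f τ
      = (1 / (n:ℝ)) * ∑ v : Fin n, ∑ τ : Fin n → Bool,
        (if ∀ w, w ≠ v → τ w = σ w then
          (if τ v then pPlus n β σ v else 1 - pPlus n β σ v) else 0) * f τ := by
    simp only [Finset.sum_mul, Finset.mul_sum, mul_assoc]
    rw [Finset.sum_comm]
  rw [step1]
  congr 1
  refine Finset.sum_congr rfl fun v _ => ?_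
  have key : ∀ τ : Fin n → Bool,
      (if ∀ w, w ≠ v → τ w = σ w then
        (if τ v then pPlus n β σ v else 1 - pPlus n β σ v) else 0) * f τ =
      (if τ = Function.update σ v true then pPlus n β σ v * f (Function.update σ v true) else 0) +
      (if τ = Function.update σ v false then
        (1 - pPlus n β σ v) * f (Function.update σ v false) else 0) := by
    intro τ
    by_cases h : ∀ w, w ≠ v → τ w = σ w
    · have hτ : τ = Function.update σ v (τ v) := by
        funext w
        by_cases hw : w = v
        · subst hw; simp
        · rw [Function.update_of_ne hw]; exact h w hw
      by_cases hv : τ v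
      · have ht : τ = Function.update σ v true := by rw [hτ, hv]
        have hf : τ ≠ Function.update σ v false := by
          intro hc
          have := congrFun hc v
          simp [hv] at this
        rw [if_pos h, if_pos hv, if_pos ht, if_neg hf, ht, add_zero]
      · have ht : τ = Function.update σ v false := by
          have hvf : τ v = false := by simpa using hv
          rw [hτ, hvf]
        have hf : τ ≠ Function.update σ v true := by
          intro hc
          have := congrFun hc v
          simp [hv] at this
        rw [if_pos h, if_neg hv, if_pos ht, if_neg hf, ht, zero_add]
    · have h1 : τ ≠ Function.update σ v true := by
        intro hc; apply h; intro w hw; rw [hc, Function.update_of_ne hw]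
      have h2 : τ ≠ Function.update σ v false := by
        intro hc; apply h; intro w hw; rw [hc, Function.update_of_ne hw]
      rw [if_neg h, if_neg h1, if_neg h2, zero_mul, add_zero]
  rw [Finset.sum_congr rfl fun τ _ => key τ, Finset.sum_add_distrib]
  rw [Finset.sum_ite_eq' Finset.univ (Function.update σ v true),
      Finset.sum_ite_eq' Finset.univ (Function.update σ v false)]
  simp

lemma glauber_rowsum (hn : 0 < n) (σ : Fin n → Bool) :
    ∑ τ, glauber n β σ τ = 1 := by
  have := Tk_glauber (β := β) (fun _ => 1) σ
  unfold Tk at this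
  simp only [mul_one] at this
  rw [this]
  have : ∀ v : Fin n, pPlus n β σ v + (1 - pPlus n β σ v) = 1 := fun v => by ring
  rw [Finset.sum_congr rfl fun v _ => this v]
  simp
  field_simp

lemma Tk_glauber_const (hn : 0 < n) (c : ℝ) (σ : Fin n → Bool) :
    Tk (glauber n β) (fun _ => c) σ = c := by
  unfold Tk
  rw [← Finset.sum_mul, glauber_rowsum hn, one_mul]

end CW
namespace CW

open Finset Real

/-- The logistic-type function appearing in Glauber rates. -/
def gfun (x : ℝ) : ℝ := Real.exp x / (Real.exp x + Real.exp (-x))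

lemma gfun_hasDeriv (x : ℝ) :
    HasDerivAt gfun (2 / (Real.exp x + Real.exp (-x))^2) x := by
  have hden : Real.exp x + Real.exp (-x) ≠ 0 := by positivity
  have h1 : HasDerivAt Real.exp (Real.exp x) x := Real.hasDerivAt_exp x
  have h2 : HasDerivAt (fun y : ℝ => Real.exp (-y)) (-Real.exp (-x)) x := by
    have := (Real.hasDerivAt_exp (-x)).comp x (hasDerivAt_neg x)
    simpa [Function.comp_def] using this
  have h3 : HasDerivAt (fun y : ℝ => Real.exp y + Real.exp (-y))
      (Real.exp x + -Real.exp (-x)) x := h1.add h2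
  have h4 := h1.div h3 hden
  convert h4 using 1 <;> try rfl
  have he : Real.exp x * Real.exp (-x) = 1 := by
    rw [← Real.exp_add]; simp
  field_simp
  ring_nf
  nlinarith [he]

lemma gfun_lip (a b : ℝ) : |gfun a - gfun b| ≤ |a - b| / 2 := by
  have hC : ((1/2 : NNReal) : ℝ) = 1/2 := by norm_num
  have hlip : LipschitzWith (1/2 : NNReal) gfun := by
    apply lipschitzWith_of_nnnorm_deriv_le
    · exact fun x => (gfun_hasDeriv x).differentiableAt
    · intro x
      rw [← NNReal.coe_le_coe, coe_nnnorm, Real.norm_eq_abs,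
        (gfun_hasDeriv x).deriv, hC]
      have h1 : (0:ℝ) < Real.exp x + Real.exp (-x) := by positivity
      have he : Real.exp x * Real.exp (-x) = 1 := by rw [← Real.exp_add]; simp
      have h4 : (4:ℝ) ≤ (Real.exp x + Real.exp (-x))^2 := by
        nlinarith [sq_nonneg (Real.exp x - Real.exp (-x))]
      rw [abs_of_nonneg (by positivity)]
      rw [div_le_iff₀ (by nlinarith)]
      nlinarith
  have h := hlip.dist_le_mul a b
  rw [Real.dist_eq, Real.dist_eq, hC] at h
  linarith

variable {n : ℕ} {β : ℝ}

lemma pPlus_eq_gfun (σ : Fin n → Bool) (v : Fin n) :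
    pPlus n β σ v = gfun (β * ((1 / (n : ℝ)) * ∑ w ∈ Finset.univ.erase v, spin (σ w))) := rfl

lemma pPlus_diff (hn : 0 < n) (hβ0 : 0 ≤ β) {σ σ' : Fin n → Bool} {j v : Fin n}
    (hv : v ≠ j) (h : ∀ w, w ≠ j → σ w = σ' w) :
    |pPlus n β σ v - pPlus n β σ' v| ≤ β / n := by
  rw [pPlus_eq_gfun, pPlus_eq_gfun]
  have hS : ∑ w ∈ Finset.univ.erase v, spin (σ w) - ∑ w ∈ Finset.univ.erase v, spin (σ' w)
      = spin (σ j) - spin (σ' j) := by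
    rw [← Finset.sum_sub_distrib]
    rw [Finset.sum_eq_single j]
    · intro w _ hw
      rw [h w hw, sub_self]
    · intro hj
      exact absurd (Finset.mem_erase.mpr ⟨fun hjv => hv hjv.symm, Finset.mem_univ j⟩) hj
  refine le_trans (gfun_lip _ _) ?_
  have : β * ((1 / (n : ℝ)) * ∑ w ∈ Finset.univ.erase v, spin (σ w)) -
      β * ((1 / (n : ℝ)) * ∑ w ∈ Finset.univ.erase v, spin (σ' w))
      = β * (1 / (n:ℝ)) * (spin (σ j) - spin (σ' j)) := by
    rw [← mul_sub, ← mul_sub, hS]; ring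
  rw [this, abs_mul, abs_of_nonneg (by positivity : (0:ℝ) ≤ β * (1/(n:ℝ)))]
  have hn' : (0:ℝ) < n := by exact_mod_cast hn
  have h2 := abs_spin_sub_le (σ j) (σ' j)
  have hb : (0:ℝ) ≤ β * (1/(n:ℝ)) := by positivity
  have h3 : β * (1/(n:ℝ)) * |spin (σ j) - spin (σ' j)| ≤ β * (1/(n:ℝ)) * 2 := by nlinarith
  calc β * (1/(n:ℝ)) * |spin (σ j) - spin (σ' j)| / 2 ≤ (β * (1/(n:ℝ)) * 2) / 2 := by linarith
    _ = β / n := by ring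

end CW
namespace CW

open Finset Real

variable {n : ℕ} {β : ℝ}

lemma exists_diff_coord {σ σ' : Fin n → Bool} (h : hammingDist σ σ' = 1) :
    ∃ j, σ j ≠ σ' j ∧ ∀ w, w ≠ j → σ w = σ' w := by
  unfold hammingDist at h
  obtain ⟨j, hj⟩ := Finset.card_eq_one.mp h
  refine ⟨j, ?_, ?_⟩
  · have : j ∈ ({i | σ i ≠ σ' i} : Finset (Fin n)) := by rw [hj]; simp
    simpa using this
  · intro w hw
    by_contra hc
    have : w ∈ ({i | σ i ≠ σ' i} : Finset (Fin n)) := by simpa using hc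
    rw [hj] at this
    exact hw (by simpa using this)

lemma update_hamming_le_one (σ σ' : Fin n → Bool) (j : Fin n)
    (h : ∀ w, w ≠ j → σ w = σ' w) : (hammingDist σ σ' : ℝ) ≤ 1 := by
  have : hammingDist σ' σ ≤ 1 :=
    hammingDist_le_one_of σ' σ j fun w hw => (h w hw)
  rw [hammingDist_comm] at this
  exact_mod_cast this

/-- Neighbor-contraction for the Glauber transfer operator. -/
lemma Tk_contract (hn : 0 < n) (hβ0 : 0 ≤ β) (L : ℝ) (hL : 0 ≤ L)
    (g : (Fin n → Bool) → ℝ)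
    (hg : ∀ x y, |g x - g y| ≤ L * hammingDist x y)
    {σ σ' : Fin n → Bool} (h1 : hammingDist σ σ' = 1) :
    |Tk (glauber n β) g σ - Tk (glauber n β) g σ'| ≤ L * (1 - (1 - β) / n) := by
  obtain ⟨j, hj, hoff⟩ := exists_diff_coord h1
  have hn' : (0:ℝ) < n := by exact_mod_cast hn
  rw [Tk_glauber, Tk_glauber, ← mul_sub, ← Finset.sum_sub_distrib]
  set D : Fin n → ℝ := fun v =>
    pPlus n β σ v * g (Function.update σ v true) +
      (1 - pPlus n β σ v) * g (Function.update σ v false) -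
      (pPlus n β σ' v * g (Function.update σ' v true) +
        (1 - pPlus n β σ' v) * g (Function.update σ' v false)) with hD
  -- the term at v = j vanishes
  have hDj : D j = 0 := by
    have hp : pPlus n β σ j = pPlus n β σ' j := by
      unfold pPlus
      have : ∑ w ∈ Finset.univ.erase j, spin (σ w)
          = ∑ w ∈ Finset.univ.erase j, spin (σ' w) :=
        Finset.sum_congr rfl fun w hw => by
          rw [hoff w (Finset.mem_erase.mp hw).1]
      rw [this]
    have hu : ∀ b, Function.update σ j b = Function.update σ' j b := by
      intro b; funext w
      by_cases hw : w = j
      · subst hw; simp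
      · rw [Function.update_of_ne hw, Function.update_of_ne hw]
        exact hoff w hw
    rw [hD]
    simp only [hp, hu]
    ring
  -- bound for v ≠ j
  have hDv : ∀ v, v ≠ j → |D v| ≤ L * (1 + β / n) := by
    intro v hv
    have hup : ∀ b, ∀ w, w ≠ j →
        Function.update σ v b w = Function.update σ' v b w := by
      intro b w hw
      by_cases hwv : w = v
      · subst hwv; simp
      · rw [Function.update_of_ne hwv, Function.update_of_ne hwv]
        exact hoff w hw
    have h1' : |g (Function.update σ v true) - g (Function.update σ' v true)| ≤ L := by
      refine le_trans (hg _ _) ?_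
      have := update_hamming_le_one (Function.update σ v true)
        (Function.update σ' v true) j (hup true)
      nlinarith
    have h0' : |g (Function.update σ v false) - g (Function.update σ' v false)| ≤ L := by
      refine le_trans (hg _ _) ?_
      have := update_hamming_le_one (Function.update σ v false)
        (Function.update σ' v false) j (hup false)
      nlinarith
    have h10 : |g (Function.update σ' v true) - g (Function.update σ' v false)| ≤ L := by
      refine le_trans (hg _ _) ?_
      have hup2 : ∀ w, w ≠ v →
          Function.update σ' v true w = Function.update σ' v false w := by
        intro w hw
        rw [Function.update_of_ne hw, Function.update_of_ne hw]
      have := update_hamming_le_one (Function.update σ' v true)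
        (Function.update σ' v false) v hup2
      nlinarith
    have hp := pPlus_diff hn hβ0 hv hoff
    have hpnn := pPlus_nonneg (β := β) σ v
    have hple := pPlus_le_one (β := β) σ v
    have halg : D v = pPlus n β σ v * (g (Function.update σ v true) - g (Function.update σ' v true))
        + (1 - pPlus n β σ v) * (g (Function.update σ v false) - g (Function.update σ' v false))
        + (pPlus n β σ v - pPlus n β σ' v) *
          (g (Function.update σ' v true) - g (Function.update σ' v false)) := by
      rw [hD]; ring
    rw [halg]
    have hb1 : 0 ≤ β / (n:ℝ) := by positivity
    calc |_| ≤ |pPlus n β σ v * (g (Function.update σ v true) - g (Function.update σ' v true))|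
        + |(1 - pPlus n β σ v) * (g (Function.update σ v false) - g (Function.update σ' v false))|
        + |(pPlus n β σ v - pPlus n β σ' v) *
          (g (Function.update σ' v true) - g (Function.update σ' v false))| :=
          abs_add_three _ _ _
      _ = pPlus n β σ v * |g (Function.update σ v true) - g (Function.update σ' v true)|
        + (1 - pPlus n β σ v) * |g (Function.update σ v false) - g (Function.update σ' v false)|
        + |pPlus n β σ v - pPlus n β σ' v| *
          |g (Function.update σ' v true) - g (Function.update σ' v false)| := by
          have hq : (0:ℝ) ≤ 1 - pPlus n β σ v := by linarith
          rw [abs_mul, abs_mul, abs_mul, abs_of_nonneg hpnn, abs_of_nonneg hq]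
      _ ≤ pPlus n β σ v * L + (1 - pPlus n β σ v) * L + (β / n) * L := by
          refine add_le_add (add_le_add ?_ ?_) ?_
          · exact mul_le_mul_of_nonneg_left h1' hpnn
          · exact mul_le_mul_of_nonneg_left h0' (by linarith)
          · exact mul_le_mul hp h10 (abs_nonneg _) hb1
      _ = L * (1 + β / n) := by ring
  have hsum : |∑ v, D v| ≤ (n - 1 : ℝ) * (L * (1 + β / n)) := by
    rw [← Finset.sum_erase _ hDj]
    refine le_trans (Finset.abs_sum_le_sum_abs _ _) ?_
    have hcard : ((Finset.univ.erase j).card : ℝ) = (n : ℝ) - 1 := by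
      rw [Finset.card_erase_of_mem (Finset.mem_univ j), Finset.card_univ, Fintype.card_fin,
        Nat.cast_sub hn, Nat.cast_one]
    calc ∑ v ∈ Finset.univ.erase j, |D v|
        ≤ ∑ _v ∈ Finset.univ.erase j, L * (1 + β / n) :=
          Finset.sum_le_sum fun v hv => hDv v (Finset.mem_erase.mp hv).1
      _ = ((Finset.univ.erase j).card : ℝ) * (L * (1 + β / n)) := by
          rw [Finset.sum_const, nsmul_eq_mul]
      _ = (n - 1 : ℝ) * (L * (1 + β / n)) := by rw [hcard]
  rw [abs_mul]
  have h1n : |(1:ℝ) / n| = 1 / n := abs_of_nonneg (by positivity)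
  rw [h1n]
  calc 1 / (n:ℝ) * |∑ v, D v| ≤ 1 / (n:ℝ) * ((n - 1 : ℝ) * (L * (1 + β / n))) := by
        exact mul_le_mul_of_nonneg_left hsum (by positivity)
    _ ≤ L * (1 - (1 - β) / n) := by
        have hkey : L * (1 - (1 - β) / (n:ℝ)) -
            1 / (n:ℝ) * (((n:ℝ) - 1) * (L * (1 + β / (n:ℝ)))) = L * β / (n:ℝ)^2 := by
          field_simp
          ring
        have hpos : 0 ≤ L * β / (n:ℝ)^2 := by positivity
        linarith

end CW
namespace CW

open Finset Real

variable {n : ℕ} {β : ℝ}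

/-- Global Lipschitz bound from bound on Hamming-neighbors. -/
lemma lip_of_neighbor (K : ℝ) (hK : 0 ≤ K) (g : (Fin n → Bool) → ℝ)
    (h : ∀ x y : Fin n → Bool, hammingDist x y = 1 → |g x - g y| ≤ K) :
    ∀ x y : Fin n → Bool, |g x - g y| ≤ K * hammingDist x y := by
  suffices H : ∀ (d : ℕ) (x y : Fin n → Bool), hammingDist x y = d → |g x - g y| ≤ K * d by
    intro x y; exact H _ x y rfl
  intro d
  induction d with
  | zero =>
      intro x y hxy
      rw [eq_of_hammingDist_eq_zero hxy]
      simp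
  | succ d ih =>
      intro x y hxy
      have hne : x ≠ y := by
        intro hc; rw [hc, hammingDist_self] at hxy; exact Nat.succ_ne_zero d hxy.symm
      obtain ⟨j, hj⟩ : ∃ j, x j ≠ y j := Function.ne_iff.mp hne
      set x' := Function.update x j (y j) with hx'
      have hmem : j ∈ ({i | x i ≠ y i} : Finset (Fin n)) := by simpa using hj
      have hfil : ({i | x' i ≠ y i} : Finset (Fin n))
          = ({i | x i ≠ y i} : Finset (Fin n)).erase j := by
        ext i
        by_cases hij : i = j
        · subst hij; simp [hx']
        · simp only [Finset.mem_filter, Finset.mem_univ, true_and, Finset.mem_erase]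
          rw [hx', Function.update_of_ne hij]
          tauto
      have hd1 : hammingDist x x' = 1 := by
        have : ({i | x i ≠ x' i} : Finset (Fin n)) = {j} := by
          ext i
          by_cases hij : i = j
          · subst hij; simp [hx', hj]
          · simp [hx', Function.update_of_ne hij, hij]
        simp [hammingDist, this]
      have hd2 : hammingDist x' y = d := by
        have : hammingDist x' y = (({i | x i ≠ y i} : Finset (Fin n)).erase j).card := by
          rw [hammingDist, hfil]
        rw [this, Finset.card_erase_of_mem hmem]
        rw [show ({i | x i ≠ y i} : Finset (Fin n)).card = d + 1 from hxy]
        rfl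
      calc |g x - g y| ≤ |g x - g x'| + |g x' - g y| := abs_sub_le _ _ _
        _ ≤ K + K * d := add_le_add (h x x' hd1) (ih x' y hd2)
        _ = K * (d + 1 : ℕ) := by push_cast; ring

/-- The transfer operator improves Lipschitz constants by `α = 1 - (1-β)/n`. -/
lemma Tk_lip (hn : 0 < n) (hβ0 : 0 ≤ β) (hβ : β < 1) (L : ℝ) (hL : 0 ≤ L)
    (g : (Fin n → Bool) → ℝ)
    (hg : ∀ x y, |g x - g y| ≤ L * hammingDist x y) :
    ∀ x y, |Tk (glauber n β) g x - Tk (glauber n β) g y| ≤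
      (L * (1 - (1 - β) / n)) * hammingDist x y := by
  have halpha : (0:ℝ) ≤ 1 - (1 - β) / n := by
    have hn1 : (1:ℝ) ≤ n := by exact_mod_cast hn
    have : (1 - β) / (n:ℝ) ≤ 1 := by
      rw [div_le_one (by linarith)]
      linarith
    linarith
  exact lip_of_neighbor _ (mul_nonneg hL halpha) _
    (fun x y hxy => Tk_contract hn hβ0 L hL g hg hxy)

lemma exp_le_cosh_add (a w l : ℝ) (ha : 0 < a) (hw : |w| ≤ a) :
    Real.exp (l * w) ≤ Real.cosh (l * a) + (w / a) * Real.sinh (l * a) := by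
  have hw1 : -a ≤ w := neg_le_of_abs_le hw
  have hw2 : w ≤ a := le_of_abs_le hw
  have ha' : a ≠ 0 := ne_of_gt ha
  have ht1 : 0 ≤ (a - w) / (2 * a) := div_nonneg (by linarith) (by linarith)
  have ht2 : 0 ≤ (a + w) / (2 * a) := div_nonneg (by linarith) (by linarith)
  have hsum : (a - w) / (2 * a) + (a + w) / (2 * a) = 1 := by field_simp; ring
  have hcomb := convexOn_exp.2 (Set.mem_univ (-(l * a))) (Set.mem_univ (l * a))
    ht1 ht2 hsum
  simp only [smul_eq_mul] at hcomb
  have heq : (a - w) / (2 * a) * (-(l * a)) + (a + w) / (2 * a) * (l * a) = l * w := by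
    field_simp
    ring
  rw [heq] at hcomb
  refine le_trans hcomb ?_
  rw [Real.cosh_eq, Real.sinh_eq]
  have h1 : (a - w) / (2 * a) * Real.exp (-(l * a)) + (a + w) / (2 * a) * Real.exp (l * a)
      = (Real.exp (l * a) + Real.exp (-(l * a))) / 2
        + (w / a) * ((Real.exp (l * a) - Real.exp (-(l * a))) / 2) := by
    field_simp
    ring
  rw [h1]

/-- One-step Hoeffding bound for the Glauber transfer operator. -/
lemma hoeffding_step (hn : 0 < n) (l L : ℝ) (hL : 0 ≤ L)
    (g : (Fin n → Bool) → ℝ)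
    (hg : ∀ x y, |g x - g y| ≤ L * hammingDist x y) (σ : Fin n → Bool) :
    Tk (glauber n β) (fun x => Real.exp (l * g x)) σ ≤
      Real.exp (l * Tk (glauber n β) g σ + 2 * l ^ 2 * L ^ 2) := by
  set m := Tk (glauber n β) g σ with hm
  have hsupp : ∀ y, glauber n β σ y ≠ 0 → |g y - g σ| ≤ L := by
    intro y hy
    refine le_trans (hg y σ) ?_
    have h1 := glauber_support (β := β) σ y hy
    rw [hammingDist_comm]
    have : (hammingDist σ y : ℝ) ≤ 1 := by exact_mod_cast h1
    nlinarith
  have hmgσ : |m - g σ| ≤ L := by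
    have hrow := glauber_rowsum (β := β) hn σ
    have : m - g σ = ∑ y, glauber n β σ y * (g y - g σ) := by
      rw [hm]
      unfold Tk
      rw [Finset.sum_congr rfl fun y _ => mul_sub (glauber n β σ y) (g y) (g σ),
        Finset.sum_sub_distrib, ← Finset.sum_mul, hrow, one_mul]
    rw [this]
    refine le_trans (Finset.abs_sum_le_sum_abs _ _) ?_
    calc ∑ y, |glauber n β σ y * (g y - g σ)|
        ≤ ∑ y, glauber n β σ y * L := by
          refine Finset.sum_le_sum fun y _ => ?_
          rw [abs_mul, abs_of_nonneg (glauber_nonneg σ y)]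
          by_cases hy : glauber n β σ y = 0
          · rw [hy]; simp
          · exact mul_le_mul_of_nonneg_left (hsupp y hy) (glauber_nonneg σ y)
      _ = L := by rw [← Finset.sum_mul, hrow, one_mul]
  by_cases hL0 : L = 0
  · subst hL0
    have hgc : ∀ y, g y = g σ := by
      intro y
      have := hg y σ
      simp only [zero_mul] at this
      have h0 := abs_nonneg (g y - g σ)
      have : |g y - g σ| = 0 := le_antisymm this h0
      linarith [abs_eq_zero.mp this]
    have hTg : Tk (glauber n β) (fun x => Real.exp (l * g x)) σ = Real.exp (l * g σ) := by
      have : (fun x => Real.exp (l * g x)) = fun _ => Real.exp (l * g σ) := by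
        funext x; rw [hgc x]
      rw [this, Tk_glauber_const hn]
    have hmσ : m = g σ := by
      have : g = fun _ => g σ := funext hgc
      rw [hm, this, Tk_glauber_const hn]
    rw [hTg, hmσ]
    apply Real.exp_le_exp.mpr
    nlinarith
  · have hLpos : 0 < L := lt_of_le_of_ne hL (Ne.symm hL0)
    have ha : 0 < 2 * L := by linarith
    have hbound : ∀ y, glauber n β σ y * Real.exp (l * g y) ≤
        glauber n β σ y * (Real.exp (l * m) *
          (Real.cosh (l * (2 * L)) + ((g y - m) / (2 * L)) * Real.sinh (l * (2 * L)))) := by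
      intro y
      by_cases hy : glauber n β σ y = 0
      · rw [hy]; simp
      · refine mul_le_mul_of_nonneg_left ?_ (glauber_nonneg σ y)
        have hwy : |g y - m| ≤ 2 * L := by
          have := hsupp y hy
          calc |g y - m| ≤ |g y - g σ| + |g σ - m| := abs_sub_le _ _ _
            _ ≤ L + L := add_le_add this (by rwa [abs_sub_comm] at hmgσ)
            _ = 2 * L := by ring
        have := exp_le_cosh_add (2 * L) (g y - m) l ha hwy
        calc Real.exp (l * g y) = Real.exp (l * m) * Real.exp (l * (g y - m)) := by
              rw [← Real.exp_add]; ring_nf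
          _ ≤ _ := mul_le_mul_of_nonneg_left this (Real.exp_pos _).le
    have hsum : ∑ y, glauber n β σ y * (g y - m) = 0 := by
      rw [Finset.sum_congr rfl fun y _ => mul_sub (glauber n β σ y) (g y) m,
        Finset.sum_sub_distrib, ← Finset.sum_mul, glauber_rowsum (β := β) hn σ, one_mul]
      rw [hm]; unfold Tk; ring
    calc Tk (glauber n β) (fun x => Real.exp (l * g x)) σ
        ≤ ∑ y, glauber n β σ y * (Real.exp (l * m) *
            (Real.cosh (l * (2 * L)) + ((g y - m) / (2 * L)) * Real.sinh (l * (2 * L)))) :=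
          Finset.sum_le_sum fun y _ => hbound y
      _ = Real.exp (l * m) * Real.cosh (l * (2 * L)) := by
          have expand : ∀ y, glauber n β σ y * (Real.exp (l * m) *
              (Real.cosh (l * (2 * L)) + ((g y - m) / (2 * L)) * Real.sinh (l * (2 * L))))
              = (Real.exp (l * m) * Real.cosh (l * (2 * L))) * glauber n β σ y
                + (Real.exp (l * m) * Real.sinh (l * (2 * L)) / (2 * L))
                  * (glauber n β σ y * (g y - m)) := by
            intro y; field_simp
          rw [Finset.sum_congr rfl fun y _ => expand y, Finset.sum_add_distrib,
            ← Finset.mul_sum, ← Finset.mul_sum, glauber_rowsum (β := β) hn σ, hsum]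
          ring
      _ ≤ Real.exp (l * m) * Real.exp ((l * (2 * L)) ^ 2 / 2) := by
          refine mul_le_mul_of_nonneg_left (Real.cosh_le_exp_half_sq _) (Real.exp_pos _).le
      _ = Real.exp (l * m + 2 * l ^ 2 * L ^ 2) := by
          rw [← Real.exp_add]
          congr 1
          ring

end CW
namespace CW

open Finset Real

variable {n : ℕ} {β : ℝ}

lemma alpha_nonneg (hn : 0 < n) (hβ0 : 0 ≤ β) (hβ : β < 1) :
    (0:ℝ) ≤ 1 - (1 - β) / n := by
  have hn1 : (1:ℝ) ≤ n := by exact_mod_cast hn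
  have : (1 - β) / (n:ℝ) ≤ 1 := by
    rw [div_le_one (by linarith)]
    linarith
  linarith

lemma alpha_lt_one (hn : 0 < n) (hβ : β < 1) : 1 - (1 - β) / (n:ℝ) < 1 := by
  have hn' : (0:ℝ) < n := by exact_mod_cast hn
  have : 0 < (1 - β) / (n:ℝ) := div_pos (by linarith) hn'
  linarith

/-- Main MGF induction: bound on the iterated transfer operator of an exponential. -/
lemma mgf_iter (hn : 0 < n) (hβ0 : 0 ≤ β) (hβ : β < 1) (l : ℝ) (t : ℕ) :
    ∀ (g : (Fin n → Bool) → ℝ) (L : ℝ), 0 ≤ L →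
      (∀ x y, |g x - g y| ≤ L * hammingDist x y) →
      ∀ σ, (Tk (glauber n β))^[t] (fun x => Real.exp (l * g x)) σ ≤
        Real.exp (l * ((Tk (glauber n β))^[t] g σ) +
          2 * l ^ 2 * L ^ 2 * ∑ i ∈ Finset.range t, ((1 - (1 - β) / n) ^ 2) ^ i) := by
  induction t with
  | zero =>
      intro g L hL hg σ
      simp
  | succ t ih =>
      intro g L hL hg σ
      have hP : ∀ x y, 0 ≤ glauber n β x y := fun x y => glauber_nonneg x y
      have halpha := alpha_nonneg hn hβ0 hβ
      set α := 1 - (1 - β) / (n:ℝ) with hα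
      rw [Function.iterate_succ_apply]
      have step1 : ∀ y, Tk (glauber n β) (fun x => Real.exp (l * g x)) y ≤
          Real.exp (2 * l ^ 2 * L ^ 2) * Real.exp (l * Tk (glauber n β) g y) := by
        intro y
        rw [← Real.exp_add]
        have := hoeffding_step (β := β) hn l L hL g hg y
        rw [show 2 * l ^ 2 * L ^ 2 + l * Tk (glauber n β) g y
          = l * Tk (glauber n β) g y + 2 * l ^ 2 * L ^ 2 by ring]
        exact this
      calc (Tk (glauber n β))^[t] (Tk (glauber n β) (fun x => Real.exp (l * g x))) σ
          ≤ (Tk (glauber n β))^[t]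
              (fun y => Real.exp (2 * l ^ 2 * L ^ 2) * Real.exp (l * Tk (glauber n β) g y)) σ :=
            Tk_iter_mono hP t step1 σ
        _ = Real.exp (2 * l ^ 2 * L ^ 2) *
              (Tk (glauber n β))^[t] (fun y => Real.exp (l * Tk (glauber n β) g y)) σ :=
            Tk_iter_const_mul _ _ t _ σ
        _ ≤ Real.exp (2 * l ^ 2 * L ^ 2) *
              Real.exp (l * ((Tk (glauber n β))^[t] (Tk (glauber n β) g) σ) +
                2 * l ^ 2 * (L * α) ^ 2 * ∑ i ∈ Finset.range t, (α ^ 2) ^ i) := by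
            refine mul_le_mul_of_nonneg_left ?_ (Real.exp_pos _).le
            exact ih (Tk (glauber n β) g) (L * α) (mul_nonneg hL halpha)
              (Tk_lip hn hβ0 hβ L hL g hg) σ
        _ ≤ Real.exp (l * ((Tk (glauber n β))^[t+1] g σ) +
              2 * l ^ 2 * L ^ 2 * ∑ i ∈ Finset.range (t+1), (α ^ 2) ^ i) := by
            rw [← Real.exp_add, Function.iterate_succ_apply]
            apply Real.exp_le_exp.mpr
            have hgeom : ∑ i ∈ Finset.range (t+1), (α ^ 2) ^ i
                = α ^ 2 * ∑ i ∈ Finset.range t, (α ^ 2) ^ i + 1 := geom_sum_succ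
            rw [hgeom]
            ring_nf
            nlinarith [sq_nonneg l, sq_nonneg L, sq_nonneg α]

end CW
namespace CW

open Finset Real

variable {n : ℕ} {β : ℝ}

/-- Interaction energy. -/
def Q (σ : Fin n → Bool) : ℝ :=
  ∑ p ∈ Finset.univ.filter (fun p : Fin n × Fin n => p.1 < p.2), spin (σ p.1) * spin (σ p.2)

lemma gibbs_eq (σ : Fin n → Bool) :
    gibbs n β σ = Real.exp ((β / n) * Q σ) / ∑ τ : Fin n → Bool, Real.exp ((β / n) * Q τ) := rfl

lemma two_Q (σ : Fin n → Bool) : 2 * Q σ = (∑ w, spin (σ w)) ^ 2 - n := by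
  have hsq : (∑ w, spin (σ w)) ^ 2
      = ∑ p ∈ (Finset.univ ×ˢ Finset.univ : Finset (Fin n × Fin n)),
          spin (σ p.1) * spin (σ p.2) := by
    rw [sq, Finset.sum_mul_sum]
    rw [Finset.sum_product]
  have hsplit : ∑ p ∈ (Finset.univ ×ˢ Finset.univ : Finset (Fin n × Fin n)),
      spin (σ p.1) * spin (σ p.2)
      = Q σ + (∑ p ∈ (Finset.univ.filter (fun p : Fin n × Fin n => p.1 = p.2)),
          spin (σ p.1) * spin (σ p.2))
        + (∑ p ∈ (Finset.univ.filter (fun p : Fin n × Fin n => p.2 < p.1)),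
          spin (σ p.1) * spin (σ p.2)) := by
    have huniv : (Finset.univ ×ˢ Finset.univ : Finset (Fin n × Fin n)) = Finset.univ := by
      simp
    rw [huniv]
    rw [← Finset.sum_filter_add_sum_filter_not Finset.univ
      (fun p : Fin n × Fin n => p.1 < p.2)]
    rw [← Finset.sum_filter_add_sum_filter_not
      (Finset.univ.filter (fun p : Fin n × Fin n => ¬ p.1 < p.2))
      (fun p : Fin n × Fin n => p.1 = p.2)]
    rw [Finset.filter_filter, Finset.filter_filter]
    have he1 : Finset.univ.filter (fun p : Fin n × Fin n => ¬ p.1 < p.2 ∧ p.1 = p.2)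
        = Finset.univ.filter (fun p : Fin n × Fin n => p.1 = p.2) := by
      apply Finset.filter_congr
      intro p _
      constructor
      · exact fun h => h.2
      · exact fun h => ⟨by rw [h]; exact lt_irrefl _, h⟩
    have he2 : Finset.univ.filter (fun p : Fin n × Fin n => ¬ p.1 < p.2 ∧ ¬ p.1 = p.2)
        = Finset.univ.filter (fun p : Fin n × Fin n => p.2 < p.1) := by
      apply Finset.filter_congr
      intro p _
      constructor
      · intro h
        rcases lt_trichotomy p.1 p.2 with h1 | h1 | h1
        · exact absurd h1 h.1
        · exact absurd h1 h.2
        · exact h1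
      · intro h
        exact ⟨fun hc => absurd (lt_trans h hc) (lt_irrefl _), fun hc => by
          rw [hc] at h; exact absurd h (lt_irrefl _)⟩
    rw [he1, he2]
    unfold Q
    ring
  have hdiag : ∑ p ∈ (Finset.univ.filter (fun p : Fin n × Fin n => p.1 = p.2)),
      spin (σ p.1) * spin (σ p.2) = n := by
    rw [Finset.sum_filter]
    rw [Fintype.sum_prod_type]
    have : ∀ i : Fin n, (∑ j : Fin n, if i = j then spin (σ i) * spin (σ j) else 0)
        = spin (σ i) * spin (σ i) := by
      intro i
      rw [Finset.sum_ite_eq Finset.univ i (fun j => spin (σ i) * spin (σ j))]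
      simp
    rw [Finset.sum_congr rfl fun i _ => this i]
    rw [Finset.sum_congr rfl fun i _ => spin_sq (σ i)]
    simp
  have hswap : ∑ p ∈ (Finset.univ.filter (fun p : Fin n × Fin n => p.2 < p.1)),
      spin (σ p.1) * spin (σ p.2) = Q σ := by
    unfold Q
    refine Finset.sum_nbij' (fun p => (p.2, p.1)) (fun p => (p.2, p.1)) ?_ ?_ ?_ ?_ ?_
    · intro p hp
      simp only [Finset.mem_filter, Finset.mem_univ, true_and] at hp ⊢
      exact hp
    · intro p hp
      simp only [Finset.mem_filter, Finset.mem_univ, true_and] at hp ⊢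
      exact hp
    · intro p _; rfl
    · intro p _; rfl
    · intro p _; ring
  rw [hsq, hsplit, hdiag, hswap]
  ring

lemma Q_diff (v : Fin n) {σ τ : Fin n → Bool} (h : ∀ w, w ≠ v → τ w = σ w) :
    Q τ - Q σ = (spin (τ v) - spin (σ v)) * ∑ w ∈ Finset.univ.erase v, spin (σ w) := by
  have hS : ∑ w ∈ Finset.univ.erase v, spin (τ w) = ∑ w ∈ Finset.univ.erase v, spin (σ w) :=
    Finset.sum_congr rfl fun w hw => by rw [h w (Finset.mem_erase.mp hw).1]
  have hMσ : ∑ w, spin (σ w) = spin (σ v) + ∑ w ∈ Finset.univ.erase v, spin (σ w) :=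
    (Finset.add_sum_erase _ _ (Finset.mem_univ v)).symm
  have hMτ : ∑ w, spin (τ w) = spin (τ v) + ∑ w ∈ Finset.univ.erase v, spin (σ w) := by
    rw [← hS]
    exact (Finset.add_sum_erase _ _ (Finset.mem_univ v)).symm
  have h2σ := two_Q σ
  have h2τ := two_Q τ
  rw [hMσ] at h2σ
  rw [hMτ] at h2τ
  have hsσ := spin_sq (σ v)
  have hsτ := spin_sq (τ v)
  nlinarith [h2σ, h2τ]

lemma Z_pos : 0 < ∑ τ : Fin n → Bool, Real.exp ((β / n) * Q τ) :=
  Finset.sum_pos (fun τ _ => Real.exp_pos _) ⟨fun _ => true, Finset.mem_univ _⟩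

lemma gibbs_nonneg (σ : Fin n → Bool) : 0 ≤ gibbs n β σ := by
  rw [gibbs_eq]
  exact div_nonneg (Real.exp_pos _).le Z_pos.le

lemma gibbs_sum_one : ∑ σ : Fin n → Bool, gibbs n β σ = 1 := by
  have := Z_pos (n := n) (β := β)
  simp only [gibbs_eq]
  rw [← Finset.sum_div]
  exact div_self (ne_of_gt this)

/-- Detailed balance for the Glauber dynamics with respect to the Gibbs measure. -/
lemma detailed_balance (σ τ : Fin n → Bool) :
    gibbs n β σ * glauber n β σ τ = gibbs n β τ * glauber n β τ σ := by
  have hZ := Z_pos (n := n) (β := β)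
  simp only [gibbs_eq]
  rw [div_mul_eq_mul_div (Real.exp ((β / n) * Q σ)) _ (glauber n β σ τ),
    div_mul_eq_mul_div (Real.exp ((β / n) * Q τ)) _ (glauber n β τ σ)]
  congr 1
  -- energy * kernel identity
  unfold glauber
  rw [mul_left_comm (Real.exp ((β / n) * Q σ)) (1/(n:ℝ)) _,
    mul_left_comm (Real.exp ((β / n) * Q τ)) (1/(n:ℝ)) _]
  congr 1
  rw [Finset.mul_sum, Finset.mul_sum]
  refine Finset.sum_congr rfl fun v _ => ?_
  by_cases hC : ∀ w, w ≠ v → τ w = σ w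
  · have hC' : ∀ w, w ≠ v → σ w = τ w := fun w hw => (hC w hw).symm
    rw [if_pos hC, if_pos hC']
    have hS : ∑ w ∈ Finset.univ.erase v, spin (τ w)
        = ∑ w ∈ Finset.univ.erase v, spin (σ w) :=
      Finset.sum_congr rfl fun w hw => by rw [hC w (Finset.mem_erase.mp hw).1]
    set x := β * ((1 / (n : ℝ)) * ∑ w ∈ Finset.univ.erase v, spin (σ w)) with hx
    have hpσ : ∀ b : Bool, (if b then pPlus n β σ v else 1 - pPlus n β σ v)
        = Real.exp (spin b * x) / (Real.exp x + Real.exp (-x)) := by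
      intro b
      cases b
      · rw [if_neg (by simp), one_sub_pPlus]
        have hsp : spin false * x = -x := by simp [spin]
        rw [hsp]
      · rw [if_pos rfl]
        have hsp : spin true * x = x := by simp [spin]
        rw [hsp]
        rfl
    have hpτ : ∀ b : Bool, (if b then pPlus n β τ v else 1 - pPlus n β τ v)
        = Real.exp (spin b * x) / (Real.exp x + Real.exp (-x)) := by
      intro b
      cases b
      · rw [if_neg (by simp), one_sub_pPlus]
        have h1 : β * ((1 / (n : ℝ)) * ∑ w ∈ Finset.univ.erase v, spin (τ w)) = x := by
          rw [hS]
        rw [h1]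
        have hsp : spin false * x = -x := by simp [spin]
        rw [hsp]
      · rw [if_pos rfl]
        have hsp : spin true * x = x := by simp [spin]
        rw [hsp]
        unfold pPlus
        rw [hS]
    rw [hpσ (τ v), hpτ (σ v)]
    have hQ := Q_diff v hC
    have hxS : x = (β / n) * ∑ w ∈ Finset.univ.erase v, spin (σ w) := by
      rw [hx]; ring
    have expand : (β / n) * Q τ - (β / n) * Q σ
        = (spin (τ v) - spin (σ v)) * x := by
      rw [hxS, ← mul_sub, hQ]; ring
    have hexp : Real.exp ((β / n) * Q σ) * Real.exp (spin (τ v) * x)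
        = Real.exp ((β / n) * Q τ) * Real.exp (spin (σ v) * x) := by
      rw [← Real.exp_add, ← Real.exp_add]
      congr 1
      linarith [expand]
    rw [div_eq_mul_inv (Real.exp (spin (τ v) * x)) _,
      div_eq_mul_inv (Real.exp (spin (σ v) * x)) _,
      ← mul_assoc (Real.exp ((β / n) * Q σ)) (Real.exp (spin (τ v) * x)) _,
      ← mul_assoc (Real.exp ((β / n) * Q τ)) (Real.exp (spin (σ v) * x)) _, hexp]
  · have hC' : ¬ ∀ w, w ≠ v → σ w = τ w := fun hc => hC fun w hw => (hc w hw).symm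
    rw [if_neg hC, if_neg hC']
    ring

lemma gibbs_stationary (hn : 0 < n) (τ : Fin n → Bool) :
    ∑ σ : Fin n → Bool, gibbs n β σ * glauber n β σ τ = gibbs n β τ := by
  rw [Finset.sum_congr rfl fun σ _ => detailed_balance σ τ]
  rw [← Finset.mul_sum, glauber_rowsum hn, mul_one]

lemma gibbs_Tk (hn : 0 < n) (g : (Fin n → Bool) → ℝ) :
    ∑ σ : Fin n → Bool, gibbs n β σ * Tk (glauber n β) g σ
      = ∑ σ : Fin n → Bool, gibbs n β σ * g σ := by
  unfold Tk
  rw [Finset.sum_congr rfl fun σ _ => Finset.mul_sum _ _ _]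
  rw [Finset.sum_comm]
  refine Finset.sum_congr rfl fun y _ => ?_
  have hre : ∑ σ : Fin n → Bool, gibbs n β σ * (glauber n β σ y * g y)
      = (∑ σ : Fin n → Bool, gibbs n β σ * glauber n β σ y) * g y := by
    rw [Finset.sum_mul]
    exact Finset.sum_congr rfl fun σ _ => by ring
  rw [hre, gibbs_stationary hn]

lemma gibbs_Tk_iter (hn : 0 < n) (t : ℕ) (g : (Fin n → Bool) → ℝ) :
    ∑ σ : Fin n → Bool, gibbs n β σ * (Tk (glauber n β))^[t] g σ
      = ∑ σ : Fin n → Bool, gibbs n β σ * g σ := by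
  induction t generalizing g with
  | zero => rfl
  | succ t ih =>
      have h1 : (Tk (glauber n β))^[t+1] g = (Tk (glauber n β))^[t] (Tk (glauber n β) g) := by
        rw [Function.iterate_succ_apply]
      rw [h1, ih (Tk (glauber n β) g), gibbs_Tk hn]

end CW
namespace CW

open Finset Real

variable {n : ℕ} {β : ℝ}

lemma iter_lip (hn : 0 < n) (hβ0 : 0 ≤ β) (hβ : β < 1)
    (f : (Fin n → Bool) → ℝ) (hf : ∀ x y, |f x - f y| ≤ (hammingDist x y : ℝ)) (t : ℕ) :
    ∀ x y, |(Tk (glauber n β))^[t] f x - (Tk (glauber n β))^[t] f y| ≤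
      (1 - (1 - β) / n) ^ t * hammingDist x y := by
  induction t with
  | zero =>
      intro x y
      simpa using hf x y
  | succ t ih =>
      intro x y
      simp only [Function.iterate_succ_apply']
      have halpha := alpha_nonneg hn hβ0 hβ
      have h := Tk_lip hn hβ0 hβ ((1 - (1 - β) / n) ^ t) (pow_nonneg halpha t)
        ((Tk (glauber n β))^[t] f) ih x y
      rw [show (1 - (1 - β) / (n:ℝ)) ^ t * (1 - (1 - β) / n) = (1 - (1 - β) / (n:ℝ)) ^ (t+1) by
        rw [pow_succ]] at h
      exact h

lemma geom_bound (hn : 0 < n) (hβ0 : 0 ≤ β) (hβ : β < 1) (t : ℕ) :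
    ∑ i ∈ Finset.range t, ((1 - (1 - β) / (n:ℝ)) ^ 2) ^ i ≤ (n:ℝ) / (1 - β) := by
  set α := 1 - (1 - β) / (n:ℝ) with hα
  have hα0 := alpha_nonneg hn hβ0 hβ
  have hα1 := alpha_lt_one hn hβ
  have hn' : (0:ℝ) < n := by exact_mod_cast hn
  have hα2 : α ^ 2 < 1 := by
    rw [hα]; exact pow_lt_one₀ hα0 hα1 two_ne_zero
  have hα20 : 0 ≤ α ^ 2 := sq_nonneg α
  have hmul := geom_sum_mul (α ^ 2) t
  have hpow : 0 ≤ (α ^ 2) ^ t := pow_nonneg hα20 t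
  have hS : (∑ i ∈ Finset.range t, (α ^ 2) ^ i) * (1 - α ^ 2) ≤ 1 := by
    nlinarith [hmul]
  have h1α : (1 - β) / (n:ℝ) ≤ 1 - α ^ 2 := by
    have : 1 - α ^ 2 = (1 - α) * (1 + α) := by ring
    rw [this, hα]
    have h2 : 1 - (1 - (1 - β) / (n:ℝ)) = (1 - β) / (n:ℝ) := by ring
    rw [h2]
    nlinarith [div_pos (by linarith : (0:ℝ) < 1 - β) hn']
  have hβn : (0:ℝ) < (1 - β) / n := div_pos (by linarith) hn'
  -- conclude: S ≤ 1/(1-α²) ≤ n/(1-β)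
  have hSle : ∑ i ∈ Finset.range t, (α ^ 2) ^ i ≤ 1 / (1 - α ^ 2) := by
    rw [le_div_iff₀ (by linarith)]
    exact hS
  refine le_trans hSle ?_
  rw [div_le_div_iff₀ (by linarith) (by linarith)]
  calc 1 * (1 - β) = (1 - β) / (n:ℝ) * n := by field_simp
    _ ≤ (1 - α ^ 2) * n := by
      apply mul_le_mul_of_nonneg_right _ hn'.le
      linarith [h1α]
    _ = (n:ℝ) * (1 - α ^ 2) := mul_comm _ _
  
/-- MGF bound for the Gibbs measure. -/
lemma gibbs_mgf (hn : 0 < n) (hβ0 : 0 ≤ β) (hβ : β < 1) (l : ℝ)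
    (f : (Fin n → Bool) → ℝ) (hf : ∀ x y, |f x - f y| ≤ (hammingDist x y : ℝ)) :
    ∑ σ : Fin n → Bool, gibbs n β σ * Real.exp (l * f σ) ≤
      Real.exp (l * (∑ σ : Fin n → Bool, gibbs n β σ * f σ) +
        2 * l ^ 2 * ((n:ℝ) / (1 - β))) := by
  set α := 1 - (1 - β) / (n:ℝ) with hα
  have hα0 := alpha_nonneg hn hβ0 hβ
  have hα1 := alpha_lt_one hn hβ
  set K := (n:ℝ) / (1 - β) with hK
  set Ef := ∑ σ : Fin n → Bool, gibbs n β σ * f σ with hEf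
  have hf1 : ∀ x y : Fin n → Bool, |f x - f y| ≤ 1 * hammingDist x y := by
    intro x y; rw [one_mul]; exact hf x y
  -- the `t`-indexed bound
  have hbound : ∀ t : ℕ, ∑ σ : Fin n → Bool, gibbs n β σ * Real.exp (l * f σ)
      ≤ Real.exp (l * Ef + |l| * (α ^ t * n) + 2 * l ^ 2 * K) := by
    intro t
    set ht := (Tk (glauber n β))^[t] f with hht
    have hEt : ∑ σ : Fin n → Bool, gibbs n β σ * ht σ = Ef := gibbs_Tk_iter hn t f
    have hlip := iter_lip hn hβ0 hβ f hf t
    have hosc : ∀ σ, |ht σ - Ef| ≤ α ^ t * n := by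
      intro σ
      have h1 : ht σ - Ef = ∑ τ : Fin n → Bool, gibbs n β τ * (ht σ - ht τ) := by
        rw [Finset.sum_congr rfl fun τ _ => mul_sub (gibbs n β τ) (ht σ) (ht τ),
          Finset.sum_sub_distrib, ← Finset.sum_mul, gibbs_sum_one, one_mul, hEt]
      rw [h1]
      refine le_trans (Finset.abs_sum_le_sum_abs _ _) ?_
      have hper : ∀ τ : Fin n → Bool, |gibbs n β τ * (ht σ - ht τ)|
          ≤ gibbs n β τ * (α ^ t * n) := by
        intro τ
        rw [abs_mul, abs_of_nonneg (gibbs_nonneg τ)]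
        refine mul_le_mul_of_nonneg_left ?_ (gibbs_nonneg τ)
        refine le_trans (hlip σ τ) ?_
        have hle : (hammingDist σ τ : ℝ) ≤ n := by
          have := hammingDist_le_card_fintype (x := σ) (y := τ)
          rw [Fintype.card_fin] at this
          exact_mod_cast this
        have := pow_nonneg hα0 t
        nlinarith
      calc ∑ τ : Fin n → Bool, |gibbs n β τ * (ht σ - ht τ)|
          ≤ ∑ τ : Fin n → Bool, gibbs n β τ * (α ^ t * n) :=
            Finset.sum_le_sum fun τ _ => hper τ
        _ = α ^ t * n := by rw [← Finset.sum_mul, gibbs_sum_one, one_mul]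
    calc ∑ σ : Fin n → Bool, gibbs n β σ * Real.exp (l * f σ)
        = ∑ σ : Fin n → Bool, gibbs n β σ *
            (Tk (glauber n β))^[t] (fun x => Real.exp (l * f x)) σ :=
          (gibbs_Tk_iter hn t _).symm
      _ ≤ ∑ σ : Fin n → Bool, gibbs n β σ *
            Real.exp (l * ht σ + 2 * l ^ 2 * 1 ^ 2 * ∑ i ∈ Finset.range t, (α ^ 2) ^ i) := by
          refine Finset.sum_le_sum fun σ _ => ?_
          exact mul_le_mul_of_nonneg_left
            (mgf_iter hn hβ0 hβ l t f 1 one_pos.le hf1 σ) (gibbs_nonneg σ)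
      _ ≤ ∑ σ : Fin n → Bool, gibbs n β σ *
            Real.exp (l * Ef + |l| * (α ^ t * n) + 2 * l ^ 2 * K) := by
          refine Finset.sum_le_sum fun σ _ => ?_
          refine mul_le_mul_of_nonneg_left ?_ (gibbs_nonneg σ)
          apply Real.exp_le_exp.mpr
          have h2 : l * ht σ ≤ l * Ef + |l| * (α ^ t * n) := by
            have h3 : l * ht σ - l * Ef = l * (ht σ - Ef) := by ring
            have h4 : l * (ht σ - Ef) ≤ |l * (ht σ - Ef)| := le_abs_self _
            rw [abs_mul] at h4
            have h5 := hosc σ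
            have h6 : |l| * |ht σ - Ef| ≤ |l| * (α ^ t * n) :=
              mul_le_mul_of_nonneg_left h5 (abs_nonneg l)
            linarith
          have h7 : 2 * l ^ 2 * 1 ^ 2 * ∑ i ∈ Finset.range t, (α ^ 2) ^ i
              ≤ 2 * l ^ 2 * K := by
            rw [one_pow, mul_one]
            exact mul_le_mul_of_nonneg_left (geom_bound hn hβ0 hβ (n := n) t)
              (by positivity)
          linarith
      _ = Real.exp (l * Ef + |l| * (α ^ t * n) + 2 * l ^ 2 * K) := by
          rw [← Finset.sum_mul, gibbs_sum_one, one_mul]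
  -- take the limit `t → ∞`
  have hpow : Filter.Tendsto (fun t : ℕ => α ^ t) Filter.atTop (nhds 0) :=
    tendsto_pow_atTop_nhds_zero_of_lt_one hα0 hα1
  have h1 : Filter.Tendsto (fun t : ℕ => l * Ef + |l| * (α ^ t * (n:ℝ)) + 2 * l ^ 2 * K)
      Filter.atTop (nhds (l * Ef + |l| * (0 * (n:ℝ)) + 2 * l ^ 2 * K)) :=
    (((hpow.mul_const (n:ℝ)).const_mul |l|).const_add (l * Ef)).add_const (2 * l ^ 2 * K)
  have h2 : Filter.Tendsto
      (fun t : ℕ => Real.exp (l * Ef + |l| * (α ^ t * (n:ℝ)) + 2 * l ^ 2 * K))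
      Filter.atTop (nhds (Real.exp (l * Ef + |l| * (0 * (n:ℝ)) + 2 * l ^ 2 * K))) :=
    (Real.continuous_exp.tendsto _).comp h1
  have h3 := ge_of_tendsto' h2 hbound
  simpa using h3

end CW
namespace CW

open Finset Real

variable {n : ℕ} {β : ℝ}

/-- One-sided Chernoff bound for the Gibbs measure. -/
lemma chernoff (hn : 0 < n) (hβ0 : 0 ≤ β) (hβ : β < 1) (u : ℝ) (hu : 0 < u)
    (g : (Fin n → Bool) → ℝ) (hg : ∀ x y, |g x - g y| ≤ (hammingDist x y : ℝ)) :
    ∑ σ : Fin n → Bool,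
        (if u ≤ g σ - ∑ τ : Fin n → Bool, gibbs n β τ * g τ then gibbs n β σ else 0)
      ≤ Real.exp (-u ^ 2 / ((8 / (1 - β)) * n)) := by
  have hn' : (0:ℝ) < n := by exact_mod_cast hn
  set K := (n:ℝ) / (1 - β) with hK
  have hKpos : 0 < K := div_pos hn' (by linarith)
  set l := u / (4 * K) with hl
  have hlpos : 0 < l := div_pos hu (by linarith)
  set Eg := ∑ τ : Fin n → Bool, gibbs n β τ * g τ with hEg
  have hper : ∀ σ : Fin n → Bool,
      (if u ≤ g σ - Eg then gibbs n β σ else 0)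
        ≤ gibbs n β σ * Real.exp (l * (g σ - Eg - u)) := by
    intro σ
    by_cases h : u ≤ g σ - Eg
    · rw [if_pos h]
      have h1 : 0 ≤ l * (g σ - Eg - u) := mul_nonneg hlpos.le (by linarith)
      have h2 : 1 ≤ Real.exp (l * (g σ - Eg - u)) := by
        rw [← Real.exp_zero]
        exact Real.exp_le_exp.mpr h1
      calc gibbs n β σ = gibbs n β σ * 1 := (mul_one _).symm
        _ ≤ gibbs n β σ * Real.exp (l * (g σ - Eg - u)) :=
            mul_le_mul_of_nonneg_left h2 (gibbs_nonneg σ)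
    · rw [if_neg h]
      exact mul_nonneg (gibbs_nonneg σ) (Real.exp_pos _).le
  calc ∑ σ : Fin n → Bool, (if u ≤ g σ - Eg then gibbs n β σ else 0)
      ≤ ∑ σ : Fin n → Bool, gibbs n β σ * Real.exp (l * (g σ - Eg - u)) :=
        Finset.sum_le_sum fun σ _ => hper σ
    _ = Real.exp (- l * (Eg + u)) * ∑ σ : Fin n → Bool, gibbs n β σ * Real.exp (l * g σ) := by
        rw [Finset.mul_sum]
        refine Finset.sum_congr rfl fun σ _ => ?_
        rw [show l * (g σ - Eg - u) = -l * (Eg + u) + l * g σ by ring, Real.exp_add]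
        ring
    _ ≤ Real.exp (- l * (Eg + u)) * Real.exp (l * Eg + 2 * l ^ 2 * K) :=
        mul_le_mul_of_nonneg_left (gibbs_mgf hn hβ0 hβ l g hg) (Real.exp_pos _).le
    _ = Real.exp (- l * u + 2 * l ^ 2 * K) := by
        rw [← Real.exp_add]
        congr 1
        ring
    _ = Real.exp (-u ^ 2 / ((8 / (1 - β)) * n)) := by
        congr 1
        rw [hl, hK]
        have h1β : (1:ℝ) - β ≠ 0 := by linarith
        field_simp
        ring
  
/-- Two-sided concentration. -/
lemma concentration (hn : 0 < n) (hβ0 : 0 ≤ β) (hβ : β < 1) (u : ℝ) (hu : 0 < u)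
    (f : (Fin n → Bool) → ℝ) (hf : ∀ x y, |f x - f y| ≤ (hammingDist x y : ℝ)) :
    pr (gibbs n β) (fun σ => u ≤ |f σ - integ (gibbs n β) f|)
      ≤ 2 * Real.exp (-u ^ 2 / ((8 / (1 - β)) * n)) := by
  rw [pr_eq]
  have hEf : integ (gibbs n β) f = ∑ τ : Fin n → Bool, gibbs n β τ * f τ := integ_eq _ _
  set Ef := ∑ τ : Fin n → Bool, gibbs n β τ * f τ with hEfd
  have hneg : ∀ x y : Fin n → Bool, |(-f) x - (-f) y| ≤ (hammingDist x y : ℝ) := by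
    intro x y
    simp only [Pi.neg_apply]
    rw [show -f x - -f y = -(f x - f y) by ring, abs_neg]
    exact hf x y
  have hEneg : ∑ τ : Fin n → Bool, gibbs n β τ * (-f) τ = -Ef := by
    rw [hEfd, ← Finset.sum_neg_distrib]
    exact Finset.sum_congr rfl fun τ _ => by simp [mul_neg]
  have hsplit : ∀ σ : Fin n → Bool,
      (if u ≤ |f σ - integ (gibbs n β) f| then gibbs n β σ else 0)
        ≤ (if u ≤ f σ - Ef then gibbs n β σ else 0)
          + (if u ≤ (-f) σ - (-Ef) then gibbs n β σ else 0) := by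
    intro σ
    by_cases h : u ≤ |f σ - integ (gibbs n β) f|
    · rw [if_pos h]
      rw [hEf] at h
      rcases le_abs.mp h with h1 | h1
      · rw [if_pos h1]
        have : (0:ℝ) ≤ if u ≤ (-f) σ - (-Ef) then gibbs n β σ else 0 := by
          by_cases h2 : u ≤ (-f) σ - (-Ef)
          · rw [if_pos h2]; exact gibbs_nonneg σ
          · rw [if_neg h2]
        linarith
      · have h2 : u ≤ (-f) σ - (-Ef) := by
          simp only [Pi.neg_apply]
          linarith
        rw [if_pos h2]
        have : (0:ℝ) ≤ if u ≤ f σ - Ef then gibbs n β σ else 0 := by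
          by_cases h3 : u ≤ f σ - Ef
          · rw [if_pos h3]; exact gibbs_nonneg σ
          · rw [if_neg h3]
        linarith
    · rw [if_neg h]
      have h1 : (0:ℝ) ≤ if u ≤ f σ - Ef then gibbs n β σ else 0 := by
        by_cases h3 : u ≤ f σ - Ef
        · rw [if_pos h3]; exact gibbs_nonneg σ
        · rw [if_neg h3]
      have h2 : (0:ℝ) ≤ if u ≤ (-f) σ - (-Ef) then gibbs n β σ else 0 := by
        by_cases h3 : u ≤ (-f) σ - (-Ef)
        · rw [if_pos h3]; exact gibbs_nonneg σ
        · rw [if_neg h3]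
      linarith
  calc ∑ σ : Fin n → Bool, (if u ≤ |f σ - integ (gibbs n β) f| then gibbs n β σ else 0)
      ≤ ∑ σ : Fin n → Bool, ((if u ≤ f σ - Ef then gibbs n β σ else 0)
          + (if u ≤ (-f) σ - (-Ef) then gibbs n β σ else 0)) :=
        Finset.sum_le_sum fun σ _ => hsplit σ
    _ = (∑ σ : Fin n → Bool, (if u ≤ f σ - Ef then gibbs n β σ else 0))
          + ∑ σ : Fin n → Bool, (if u ≤ (-f) σ - (-Ef) then gibbs n β σ else 0) :=
        Finset.sum_add_distrib
    _ ≤ Real.exp (-u ^ 2 / ((8 / (1 - β)) * n)) + Real.exp (-u ^ 2 / ((8 / (1 - β)) * n)) := by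
        refine add_le_add ?_ ?_
        · exact chernoff hn hβ0 hβ u hu f hf
        · have h := chernoff hn hβ0 hβ u hu (-f) hneg
          rw [hEneg] at h
          exact h
    _ = 2 * Real.exp (-u ^ 2 / ((8 / (1 - β)) * n)) := by ring

end CW

/-- For the subcritical (`β < 1`) Curie-Weiss model: one-step Wasserstein
contraction `1 - (1-β)/n` for the Glauber dynamics between configurations at
Hamming distance 1, and consequent normal concentration at scale `√n` of the
Gibbs measure for Hamming-Lipschitz functions. -/
theorem stmt15 (β : ℝ) (hβ0 : 0 ≤ β) (hβ : β < 1) :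
    (∀ n : ℕ, 0 < n → ∀ σ σ' : Fin n → Bool, hammingDist σ σ' = 1 →
      dW (fun a b : Fin n → Bool => (hammingDist a b : ℝ))
          (step (glauber n β) (delta σ)) (step (glauber n β) (delta σ'))
        ≤ 1 - (1 - β) / n) ∧
    ∃ c C : ℝ, 0 < c ∧ 0 < C ∧
      ∀ n : ℕ, 0 < n → ∀ u : ℝ, 0 < u →
        ∀ f : (Fin n → Bool) → ℝ,
          IsLip (fun a b : Fin n → Bool => (hammingDist a b : ℝ)) f →
          pr (gibbs n β) (fun σ => u ≤ |f σ - integ (gibbs n β) f|)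
            ≤ C * Real.exp (-u ^ 2 / (c * n)) := by
  constructor
  · intro n hn σ σ' hham
    apply Real.sSup_le
    · rintro r ⟨f, hf, rfl⟩
      rw [CW.integ_step_delta, CW.integ_step_delta]
      have hf1 : ∀ x y : Fin n → Bool, |f x - f y| ≤ 1 * (hammingDist x y : ℝ) := by
        intro x y; rw [one_mul]; exact hf x y
      have h := CW.Tk_contract hn hβ0 1 one_pos.le f hf1 hham
      rwa [one_mul] at h
    · exact CW.alpha_nonneg hβ0 hβ (hn := ‹0 < n›)
  · have h1β : (0:ℝ) < 1 - β := by linarith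
    refine ⟨8 / (1 - β), 2, by positivity, by norm_num, ?_⟩
    intro n hn u hu f hf
    have hf' : ∀ x y : Fin n → Bool, |f x - f y| ≤ (hammingDist x y : ℝ) := hf
    exact CW.concentration hn hβ0 hβ u hu f hf'
end
end

section
/- For the Curie-Weiss Ising model with β > 1, the Gibbs measure π does not exhibit normal concentration at scale √n: there exists a constant c > 0 such that π({σ : m(σ) ≥ cn}) ≥ 1/4 and π({σ : m(σ) ≤ −cn}) ≥ 1/4, where m(σ) = Σ_{i=1}^n σ(i) is the magnetisation; note that m/2 is 1-Lipschitz for the Hamming metric and π(m) = 0. -/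
open scoped BigOperators Classical
open Filter

noncomputable section

variable {S : Type*}

/-- The magnetisation of a configuration. -/
def mag {n : ℕ} (σ : Fin n → Bool) : ℝ := ∑ i, spin (σ i)

lemma spin_sq (b : Bool) : spin b * spin b = 1 := by cases b <;> simp [spin]

lemma spin_not (b : Bool) : spin (!b) = -spin b := by cases b <;> simp [spin]

lemma abs_spin_sub (a b : Bool) : |spin a - spin b| ≤ 2 := by
  cases a <;> cases b <;> norm_num [spin]

-- Lipschitz
lemma lip_mag {n : ℕ} (σ τ : Fin n → Bool) :
    |mag σ / 2 - mag τ / 2| ≤ (hammingDist σ τ : ℝ) := by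
  have h : mag σ - mag τ = ∑ i, (spin (σ i) - spin (τ i)) := by
    simp [mag, Finset.sum_sub_distrib]
  have h2 : |mag σ - mag τ| ≤ 2 * hammingDist σ τ := by
    rw [h]
    calc |∑ i, (spin (σ i) - spin (τ i))| ≤ ∑ i, |spin (σ i) - spin (τ i)| :=
          Finset.abs_sum_le_sum_abs _ _
      _ ≤ ∑ i ∈ Finset.univ.filter (fun i => σ i ≠ τ i), 2 := by
          rw [Finset.sum_filter]
          apply Finset.sum_le_sum
          intro i _
          by_cases hi : σ i = τ i
          · simp [hi]
          · simp [hi]; exact abs_spin_sub _ _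
      _ = 2 * hammingDist σ τ := by
          rw [Finset.sum_const, hammingDist]
          push_cast; ring
  have := abs_div (mag σ - mag τ) 2
  rw [div_sub_div_same]
  rw [this]
  rw [abs_of_pos (by norm_num : (0:ℝ) < 2)]
  linarith

def pairSum {n : ℕ} (σ : Fin n → Bool) : ℝ :=
  ∑ p ∈ Finset.univ.filter (fun p : Fin n × Fin n => p.1 < p.2), spin (σ p.1) * spin (σ p.2)

lemma two_pairSum {n : ℕ} (σ : Fin n → Bool) :
    2 * pairSum σ = mag σ ^ 2 - n := by
  classical
  set f : Fin n × Fin n → ℝ := fun p => spin (σ p.1) * spin (σ p.2) with hf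
  have hsq : mag σ ^ 2 = ∑ p : Fin n × Fin n, f p := by
    rw [sq, mag, Finset.sum_mul_sum, ← Finset.sum_product', Finset.univ_product_univ]
  have hsplit : ∑ p : Fin n × Fin n, f p =
      (∑ p ∈ Finset.univ.filter (fun p : Fin n × Fin n => p.1 < p.2), f p)
      + ((∑ p ∈ Finset.univ.filter (fun p : Fin n × Fin n => p.2 < p.1), f p)
      + (∑ p ∈ Finset.univ.filter (fun p : Fin n × Fin n => p.1 = p.2), f p)) := by
    rw [← Finset.sum_filter_add_sum_filter_not Finset.univ
      (fun p : Fin n × Fin n => p.1 < p.2) f]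
    congr 1
    rw [← Finset.sum_filter_add_sum_filter_not
      (Finset.univ.filter (fun p : Fin n × Fin n => ¬ p.1 < p.2))
      (fun p : Fin n × Fin n => p.2 < p.1) f]
    congr 2
    · ext p; simp; omega
    · ext p; simp; omega
  have hswap : ∑ p ∈ Finset.univ.filter (fun p : Fin n × Fin n => p.2 < p.1), f p
      = ∑ p ∈ Finset.univ.filter (fun p : Fin n × Fin n => p.1 < p.2), f p := by
    apply Finset.sum_nbij' (fun p => Prod.swap p) (fun p => Prod.swap p) <;>
      simp [hf, mul_comm]
  have hdiag : ∑ p ∈ Finset.univ.filter (fun p : Fin n × Fin n => p.1 = p.2), f p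
      = n := by
    rw [Finset.sum_filter, ← Finset.univ_product_univ, Finset.sum_product]
    have : ∀ i : Fin n, (∑ j : Fin n, if (i, j).1 = (i, j).2 then f (i, j) else 0) = 1 := by
      intro i
      simp only []
      rw [Finset.sum_ite_eq (Finset.univ) i (fun j => f (i, j))]
      simp [hf, spin_sq]
    rw [Finset.sum_congr rfl (fun i _ => this i)]
    simp
  have : pairSum σ = ∑ p ∈ Finset.univ.filter (fun p : Fin n × Fin n => p.1 < p.2), f p := rfl
  rw [this, hsq, hsplit, hswap, hdiag]; ring

def cardTrue {n : ℕ} (σ : Fin n → Bool) : ℕ := (Finset.univ.filter fun i => σ i = true).card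

lemma mag_eq_card {n : ℕ} (σ : Fin n → Bool) : mag σ = 2 * cardTrue σ - n := by
  classical
  rw [mag, ← Finset.sum_filter_add_sum_filter_not Finset.univ (fun i => σ i = true)]
  have h1 : ∑ i ∈ Finset.univ.filter (fun i => σ i = true), spin (σ i)
      = (cardTrue σ : ℝ) := by
    rw [Finset.sum_congr rfl (fun i hi => by
      simp only [Finset.mem_filter] at hi; rw [hi.2])]
    simp [cardTrue, spin]
  have h2 : ∑ i ∈ Finset.univ.filter (fun i => ¬ σ i = true), spin (σ i)
      = -((n : ℝ) - cardTrue σ) := by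
    rw [Finset.sum_congr rfl (fun i hi => by
      simp only [Finset.mem_filter, Bool.not_eq_true] at hi; rw [hi.2])]
    rw [Finset.sum_const]
    have hcard : (Finset.univ.filter (fun i => ¬ σ i = true)).card = n - cardTrue σ := by
      rw [Finset.filter_not, Finset.card_sdiff_of_subset (Finset.filter_subset _ _)]
      simp [cardTrue]
    rw [hcard]
    have hle : cardTrue σ ≤ n := by
      calc cardTrue σ ≤ Finset.univ.card := Finset.card_filter_le _ _
        _ = n := by simp
    have hsf : spin false = -1 := rfl
    rw [hsf]
    rw [nsmul_eq_mul, Nat.cast_sub hle]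
    ring
  rw [h1, h2]
  ring

lemma card_config {n : ℕ} (j : ℕ) :
    (Finset.univ.filter fun σ : Fin n → Bool => cardTrue σ = j).card = n.choose j := by
  classical
  have hrhs : n.choose j = (Finset.powersetCard j (Finset.univ : Finset (Fin n))).card := by
    rw [Finset.card_powersetCard]; simp
  rw [hrhs]
  · apply Finset.card_nbij' (fun σ => Finset.univ.filter fun i => σ i = true)
      (fun s i => decide (i ∈ s))
    · intro σ hσ
      simp only [Finset.coe_filter, Set.mem_setOf_eq, Finset.mem_coe, Finset.mem_filter, Finset.mem_univ, true_and] at hσ ⊢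
      rw [Finset.mem_powersetCard]
      exact ⟨Finset.subset_univ _, hσ⟩
    · intro s hs
      rw [Finset.mem_coe, Finset.mem_powersetCard] at hs
      rw [Finset.mem_coe, Finset.mem_filter]
      simp only [Finset.mem_univ, true_and, cardTrue]
      rw [← hs.2]
      congr 1
      ext i; simp
    · intro σ hσ
      funext i; simp
    · intro s hs
      ext i; simp

def wt (n : ℕ) (β : ℝ) (σ : Fin n → Bool) : ℝ := Real.exp (β * mag σ ^ 2 / (2 * n))

def Zw (n : ℕ) (β : ℝ) : ℝ := ∑ σ : Fin n → Bool, wt n β σ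

lemma Zw_pos (n : ℕ) (β : ℝ) : 0 < Zw n β :=
  Finset.sum_pos (fun σ _ => Real.exp_pos _) ⟨fun _ => true, Finset.mem_univ _⟩

lemma exp_pair (n : ℕ) (hn : 0 < n) (β : ℝ) (σ : Fin n → Bool) :
    Real.exp ((β / n) * pairSum σ) = wt n β σ * Real.exp (-(β/2)) := by
  rw [wt, ← Real.exp_add]
  congr 1
  have h := two_pairSum σ
  have hps : pairSum σ = (mag σ ^ 2 - n) / 2 := by linarith
  rw [hps]
  have hn' : (n : ℝ) ≠ 0 := Nat.cast_ne_zero.mpr hn.ne'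
  field_simp
  ring

lemma gibbs_eq_wt (n : ℕ) (hn : 0 < n) (β : ℝ) (σ : Fin n → Bool) :
    gibbs n β σ = wt n β σ / Zw n β := by
  have hnum : ∀ τ : Fin n → Bool,
      Real.exp ((β / n) * ∑ p ∈ Finset.univ.filter (fun p : Fin n × Fin n => p.1 < p.2),
        spin (τ p.1) * spin (τ p.2)) = wt n β τ * Real.exp (-(β/2)) := fun τ => exp_pair n hn β τ
  rw [gibbs, hnum σ, Finset.sum_congr rfl (fun τ _ => hnum τ), ← Finset.sum_mul, ← Zw]
  rw [mul_div_mul_right _ _ (Real.exp_ne_zero _)]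

def flipc {n : ℕ} (σ : Fin n → Bool) : Fin n → Bool := fun i => !(σ i)

lemma flip_invol {n : ℕ} : Function.Involutive (flipc (n := n)) := by
  intro σ; funext i; simp [flipc]

lemma mag_flip {n : ℕ} (σ : Fin n → Bool) : mag (flipc σ) = -mag σ := by
  simp [mag, flipc, spin_not]

lemma wt_flip (n : ℕ) (β : ℝ) (σ : Fin n → Bool) : wt n β (flipc σ) = wt n β σ := by
  rw [wt, wt, mag_flip]; ring_nf

lemma sum_flip {n : ℕ} (F : (Fin n → Bool) → ℝ) :
    ∑ σ : Fin n → Bool, F (flipc σ) = ∑ σ : Fin n → Bool, F σ :=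
  Equiv.sum_comp (flip_invol.toPerm _) F

lemma gibbs_flip (n : ℕ) (hn : 0 < n) (β : ℝ) (σ : Fin n → Bool) :
    gibbs n β (flipc σ) = gibbs n β σ := by
  rw [gibbs_eq_wt n hn β, gibbs_eq_wt n hn β, wt_flip]

lemma integ_gibbs_mag (n : ℕ) (hn : 0 < n) (β : ℝ) : integ (gibbs n β) mag = 0 := by
  have h : integ (gibbs n β) mag = ∑ σ : Fin n → Bool, gibbs n β σ * mag σ := tsum_fintype _
  have h2 : ∑ σ : Fin n → Bool, gibbs n β σ * mag σ
      = ∑ σ : Fin n → Bool, gibbs n β (flipc σ) * mag (flipc σ) :=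
    (sum_flip (fun σ => gibbs n β σ * mag σ)).symm
  have h3 : ∑ σ : Fin n → Bool, gibbs n β (flipc σ) * mag (flipc σ)
      = -∑ σ : Fin n → Bool, gibbs n β σ * mag σ := by
    rw [← Finset.sum_neg_distrib]
    apply Finset.sum_congr rfl
    intro σ _
    rw [gibbs_flip n hn, mag_flip]; ring
  rw [h]; linarith [h2.trans h3]

lemma pr_flip (n : ℕ) (hn : 0 < n) (β : ℝ) (r : ℝ) :
    pr (gibbs n β) (fun σ => r ≤ mag σ) = pr (gibbs n β) (fun σ => mag σ ≤ -r) := by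
  rw [pr, pr, tsum_fintype, tsum_fintype]
  rw [← sum_flip (fun σ => if r ≤ mag σ then gibbs n β σ else 0)]
  apply Finset.sum_congr rfl
  intro σ _
  rw [mag_flip, gibbs_flip n hn]
  congr 1
  simp only [eq_iff_iff]
  constructor <;> intro <;> linarith

lemma pr_eq_sum (n : ℕ) (hn : 0 < n) (β : ℝ) (A : (Fin n → Bool) → Prop) :
    pr (gibbs n β) A = (∑ σ : Fin n → Bool, if A σ then wt n β σ else 0) / Zw n β := by
  rw [pr, tsum_fintype, Finset.sum_div]
  apply Finset.sum_congr rfl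
  intro σ _
  by_cases hA : A σ
  · rw [if_pos hA, if_pos hA, gibbs_eq_wt n hn]
  · rw [if_neg hA, if_neg hA, zero_div]

/-- If the central mass is dominated by the right-tail mass, then the right tail
has probability at least 1/3 ≥ 1/4. -/
lemma pr_tail_ge (n : ℕ) (hn : 0 < n) (β : ℝ) (r : ℝ) (hr : 0 < r)
    (key : (∑ σ : Fin n → Bool, if |mag σ| < r then wt n β σ else 0)
        ≤ ∑ σ : Fin n → Bool, if r ≤ mag σ then wt n β σ else 0) :
    1 / 4 ≤ pr (gibbs n β) (fun σ => r ≤ mag σ) := by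
  set SP := ∑ σ : Fin n → Bool, if r ≤ mag σ then wt n β σ else 0 with hSP
  set SM := ∑ σ : Fin n → Bool, if mag σ ≤ -r then wt n β σ else 0 with hSM
  set S0 := ∑ σ : Fin n → Bool, if |mag σ| < r then wt n β σ else 0 with hS0
  have hdecomp : Zw n β = SP + SM + S0 := by
    rw [Zw, hSP, hSM, hS0, ← Finset.sum_add_distrib, ← Finset.sum_add_distrib]
    apply Finset.sum_congr rfl
    intro σ _
    rcases le_or_gt r (mag σ) with h1 | h1
    · rw [if_pos h1, if_neg (by intro h; linarith), if_neg (by rw [abs_lt]; intro h; linarith)]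
      ring
    · rcases le_or_gt (mag σ) (-r) with h2 | h2
      · rw [if_neg (by linarith), if_pos h2, if_neg (by rw [abs_lt]; intro h; linarith)]
        ring
      · rw [if_neg (by linarith), if_neg (by linarith), if_pos (by rw [abs_lt]; exact ⟨h2, h1⟩)]
        ring
  have hSMeq : SM = SP := by
    rw [hSM, hSP, ← sum_flip (fun σ => if r ≤ mag σ then wt n β σ else 0)]
    apply Finset.sum_congr rfl
    intro σ _
    rw [mag_flip, wt_flip]
    congr 1
    simp only [eq_iff_iff]
    constructor <;> intro <;> linarith
  have hZ : Zw n β ≤ 3 * SP := by rw [hdecomp, hSMeq]; linarith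
  have hZpos := Zw_pos n β
  have hSPpos : 0 < SP := by linarith
  rw [pr_eq_sum n hn β, ← hSP]
  calc (1:ℝ)/4 ≤ 1/3 := by norm_num
    _ ≤ SP / Zw n β := by
        rw [div_le_div_iff₀ (by norm_num) hZpos]
        linarith

lemma sum_center_le (n : ℕ) (hn : 0 < n) (β : ℝ) (hβ : 0 ≤ β) (r : ℝ) :
    (∑ σ : Fin n → Bool, if |mag σ| < r then wt n β σ else 0)
      ≤ 2 ^ n * Real.exp (β * r ^ 2 / (2 * n)) := by
  have hbound : ∀ σ : Fin n → Bool,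
      (if |mag σ| < r then wt n β σ else 0) ≤ Real.exp (β * r ^ 2 / (2 * n)) := by
    intro σ
    by_cases h : |mag σ| < r
    · rw [if_pos h, wt]
      apply Real.exp_le_exp.mpr
      apply div_le_div_of_nonneg_right _ (by positivity)
      · apply mul_le_mul_of_nonneg_left _ hβ
        calc mag σ ^ 2 = |mag σ| ^ 2 := (sq_abs _).symm
          _ ≤ r ^ 2 := by nlinarith [abs_nonneg (mag σ)]
    · rw [if_neg h]; positivity
  calc (∑ σ : Fin n → Bool, if |mag σ| < r then wt n β σ else 0)
      ≤ ∑ _σ : Fin n → Bool, Real.exp (β * r ^ 2 / (2 * n)) :=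
        Finset.sum_le_sum (fun σ _ => hbound σ)
    _ = 2 ^ n * Real.exp (β * r ^ 2 / (2 * n)) := by
        rw [Finset.sum_const, Finset.card_univ]
        rw [nsmul_eq_mul]
        congr 1
        rw [Fintype.card_fun]
        simp

lemma sum_tail_ge (n : ℕ) (β : ℝ) (r : ℝ) (j : ℕ)
    (hr : r ≤ 2 * (j : ℝ) - n) :
    (n.choose j : ℝ) * Real.exp (β * (2 * (j:ℝ) - n) ^ 2 / (2 * n))
      ≤ ∑ σ : Fin n → Bool, if r ≤ mag σ then wt n β σ else 0 := by
  classical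
  have hsub : ∀ σ ∈ Finset.univ.filter (fun σ : Fin n → Bool => cardTrue σ = j),
      (if r ≤ mag σ then wt n β σ else 0)
        = Real.exp (β * (2 * (j:ℝ) - n) ^ 2 / (2 * n)) := by
    intro σ hσ
    simp only [Finset.mem_filter] at hσ
    have hm : mag σ = 2 * (j : ℝ) - n := by rw [mag_eq_card, hσ.2]
    rw [if_pos (by rw [hm]; exact hr), wt, hm]
  calc (n.choose j : ℝ) * Real.exp (β * (2 * (j:ℝ) - n) ^ 2 / (2 * n))
      = ∑ σ ∈ Finset.univ.filter (fun σ : Fin n → Bool => cardTrue σ = j),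
          (if r ≤ mag σ then wt n β σ else 0) := by
        rw [Finset.sum_congr rfl hsub, Finset.sum_const, card_config, nsmul_eq_mul]
    _ ≤ ∑ σ : Fin n → Bool, if r ≤ mag σ then wt n β σ else 0 := by
        apply Finset.sum_le_sum_of_subset_of_nonneg (Finset.filter_subset _ _)
        intro σ _ _
        by_cases h : r ≤ mag σ
        · rw [if_pos h]; exact (Real.exp_pos _).le
        · rw [if_neg h]

lemma two_pow_le (n : ℕ) : (2:ℝ) ^ n ≤ (n + 1) * (n.choose (n/2)) := by
  have h : 2 ^ n ≤ (n + 1) * (n.choose (n/2)) := by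
    calc 2 ^ n = ∑ i ∈ Finset.range (n + 1), n.choose i := (Nat.sum_range_choose n).symm
      _ ≤ ∑ _i ∈ Finset.range (n + 1), n.choose (n/2) :=
          Finset.sum_le_sum (fun i _ => Nat.choose_le_middle i n)
      _ = (n + 1) * (n.choose (n/2)) := by rw [Finset.sum_const, Finset.card_range, smul_eq_mul]
  calc (2:ℝ) ^ n = ((2 ^ n : ℕ) : ℝ) := by push_cast; ring
    _ ≤ (((n + 1) * (n.choose (n/2)) : ℕ) : ℝ) := Nat.cast_le.mpr h
    _ = (n + 1) * (n.choose (n/2)) := by push_cast; ring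

lemma choose_prod (n m0 : ℕ) : ∀ d : ℕ, m0 + d ≤ n →
    (n.choose (m0 + d) : ℝ)
      = (n.choose m0 : ℝ) * ∏ l ∈ Finset.range d, (((n:ℝ) - m0 - l) / (m0 + l + 1)) := by
  intro d
  induction d with
  | zero => simp
  | succ d ih =>
    intro hle
    have hle' : m0 + d ≤ n := by omega
    have hrec := Nat.choose_succ_right_eq n (m0 + d)
    have hcast : (n.choose (m0 + d + 1) : ℝ) * ((m0:ℝ) + d + 1)
        = (n.choose (m0 + d) : ℝ) * ((n:ℝ) - m0 - d) := by
      have : ((n - (m0 + d) : ℕ) : ℝ) = (n:ℝ) - m0 - d := by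
        rw [Nat.cast_sub hle']; push_cast; ring
      calc (n.choose (m0 + d + 1) : ℝ) * ((m0:ℝ) + d + 1)
          = ((n.choose (m0 + d + 1) * (m0 + d + 1) : ℕ) : ℝ) := by push_cast; ring
        _ = ((n.choose (m0 + d) * (n - (m0 + d)) : ℕ) : ℝ) := by rw [hrec]
        _ = (n.choose (m0 + d) : ℝ) * ((n:ℝ) - m0 - d) := by
            push_cast [hle']; ring
    have hpos : (0:ℝ) < (m0:ℝ) + d + 1 := by positivity
    have heq : (n.choose (m0 + (d+1)) : ℝ)
        = (n.choose (m0 + d) : ℝ) * (((n:ℝ) - m0 - d) / ((m0:ℝ) + d + 1)) := by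
      rw [show m0 + (d+1) = m0 + d + 1 by ring]
      field_simp
      linarith [hcast]
    rw [heq, ih hle', Finset.prod_range_succ]
    ring

lemma sum_odds (d : ℕ) : ∑ l ∈ Finset.range d, (2*(l:ℝ)+1) = (d:ℝ)^2 := by
  induction d with
  | zero => simp
  | succ d ih => rw [Finset.sum_range_succ, ih]; push_cast; ring

lemma sum_odds_sq (d : ℕ) : ∑ l ∈ Finset.range d, (2*(l:ℝ)+1)^2 ≤ 4*(d:ℝ)^3 := by
  calc ∑ l ∈ Finset.range d, (2*(l:ℝ)+1)^2 ≤ ∑ _l ∈ Finset.range d, (2*(d:ℝ))^2 := by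
        apply Finset.sum_le_sum
        intro l hl
        have : (l:ℝ) < d := by exact_mod_cast Finset.mem_range.mp hl
        have h1 : 0 ≤ 2*(l:ℝ)+1 := by positivity
        have h2 : 2*(l:ℝ)+1 ≤ 2*(d:ℝ) := by
          have := Finset.mem_range.mp hl
          have : (l:ℝ) + 1 ≤ d := by exact_mod_cast this
          linarith
        nlinarith
    _ = 4*(d:ℝ)^3 := by
        rw [Finset.sum_const, Finset.card_range, nsmul_eq_mul]; ring

lemma one_sub_ge_exp (y : ℝ) (h0 : 0 ≤ y) (h1 : y ≤ 1/2) :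
    Real.exp (-(y + 2*y^2)) ≤ 1 - y := by
  have hy1 : y < 1 := by linarith
  have h2 : y/(1-y) ≤ y + 2*y^2 := by
    rw [div_le_iff₀ (by linarith)]
    nlinarith
  have h3 : 1/(1-y) ≤ Real.exp (y/(1-y)) := by
    have := Real.add_one_le_exp (y/(1-y))
    have hne : (1:ℝ) - y ≠ 0 := by linarith
    have he : y/(1-y) + 1 = 1/(1-y) := by field_simp; ring
    linarith
  calc Real.exp (-(y + 2*y^2)) ≤ Real.exp (-(y/(1-y))) := Real.exp_le_exp.mpr (by linarith)
    _ = 1 / Real.exp (y/(1-y)) := by rw [Real.exp_neg]; rw [one_div]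
    _ ≤ 1 / (1/(1-y)) := by
        apply div_le_div_of_nonneg_left (by norm_num) (one_div_pos.mpr (by linarith)) h3
    _ = 1 - y := by field_simp

lemma choose_lb (n d : ℕ) (hd : 4*d ≤ n/2) :
    (2:ℝ)^n / (n+1) * Real.exp (-((d:ℝ)^2/(n/2:ℕ) + 8*(d:ℝ)^3/((n/2:ℕ):ℝ)^2))
      ≤ (n.choose (n/2 + d) : ℝ) := by
  set m0 := n/2 with hm0
  have hmd : m0 + d ≤ n := by omega
  have h2m : 2*m0 ≤ n := by omega
  have hcp := choose_prod n m0 d hmd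
  have hchoose : (2:ℝ)^n / (n+1) ≤ (n.choose m0 : ℝ) := by
    rw [div_le_iff₀ (by positivity)]
    calc (2:ℝ)^n ≤ (n+1) * (n.choose m0) := two_pow_le n
      _ = (n.choose m0 : ℝ) * (n+1) := by ring
  rcases Nat.eq_zero_or_pos d with hd0 | hd1
  · subst hd0
    simp only [Nat.cast_zero] at *
    rw [hcp]
    simp only [Finset.range_zero, Finset.prod_empty, mul_one]
    calc (2:ℝ)^n / (n+1) * Real.exp (-(0^2/(m0:ℝ) + 8*0^3/(m0:ℝ)^2))
        = (2:ℝ)^n / (n+1) := by norm_num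
      _ ≤ _ := hchoose
  · have hm0pos : 0 < m0 := by omega
    have hm0r : (0:ℝ) < m0 := by exact_mod_cast hm0pos
    -- per-factor bound
    have hfac : ∀ l ∈ Finset.range d,
        Real.exp (-((2*(l:ℝ)+1)/m0 + 2*((2*(l:ℝ)+1)/m0)^2))
          ≤ ((n:ℝ) - m0 - l) / (m0 + l + 1) := by
      intro l hl
      have hld : l + 1 ≤ d := Finset.mem_range.mp hl
      have hldr : (l:ℝ) + 1 ≤ d := by exact_mod_cast hld
      have hlr : (0:ℝ) ≤ l := Nat.cast_nonneg l
      have hdm : (4:ℝ)*d ≤ m0 := by exact_mod_cast hd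
      set y := (2*(l:ℝ)+1)/m0 with hy
      have hy0 : 0 ≤ y := by positivity
      have hy12 : y ≤ 1/2 := by
        rw [hy, div_le_iff₀ hm0r]
        nlinarith
      have h1 : Real.exp (-(y + 2*y^2)) ≤ 1 - y := one_sub_ge_exp y hy0 hy12
      have h2 : 1 - y ≤ ((m0:ℝ) - l) / (m0 + l + 1) := by
        have hden : (0:ℝ) < (m0:ℝ) + l + 1 := by positivity
        have hLHS : 1 - y = ((m0:ℝ) - 2*l - 1)/m0 := by
          rw [hy]; field_simp; ring
        rw [hLHS, div_le_div_iff₀ hm0r hden]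
        nlinarith
      have h3 : ((m0:ℝ) - l) / (m0 + l + 1) ≤ ((n:ℝ) - m0 - l) / (m0 + l + 1) := by
        gcongr
        · have h2m' : (2*(m0:ℝ)) ≤ n := by exact_mod_cast h2m
          linarith
      calc Real.exp (-(y + 2*y^2)) ≤ 1 - y := h1
        _ ≤ ((m0:ℝ) - l) / (m0 + l + 1) := h2
        _ ≤ ((n:ℝ) - m0 - l) / (m0 + l + 1) := h3
    -- product bound
    have hprodge : Real.exp (-((d:ℝ)^2/(m0:ℝ) + 8*(d:ℝ)^3/(m0:ℝ)^2))
        ≤ ∏ l ∈ Finset.range d, (((n:ℝ) - m0 - l) / (m0 + l + 1)) := by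
      have hexp : ∏ l ∈ Finset.range d,
          Real.exp (-((2*(l:ℝ)+1)/m0 + 2*((2*(l:ℝ)+1)/m0)^2))
            = Real.exp (∑ l ∈ Finset.range d, -((2*(l:ℝ)+1)/m0 + 2*((2*(l:ℝ)+1)/m0)^2)) :=
        (Real.exp_sum _ _).symm
      have hsum : -((d:ℝ)^2/(m0:ℝ) + 8*(d:ℝ)^3/(m0:ℝ)^2)
          ≤ ∑ l ∈ Finset.range d, -((2*(l:ℝ)+1)/m0 + 2*((2*(l:ℝ)+1)/m0)^2) := by
        have hne : (m0:ℝ) ≠ 0 := ne_of_gt hm0r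
        have e1 : ∑ l ∈ Finset.range d, -((2*(l:ℝ)+1)/m0 + 2*((2*(l:ℝ)+1)/m0)^2)
            = -((∑ l ∈ Finset.range d, (2*(l:ℝ)+1))/m0
               + 2*(∑ l ∈ Finset.range d, (2*(l:ℝ)+1)^2)/m0^2) := by
          have hterm : ∀ l : ℕ, -((2*(l:ℝ)+1)/m0 + 2*((2*(l:ℝ)+1)/m0)^2)
              = -(1/(m0:ℝ)) * (2*(l:ℝ)+1) + (-2/(m0:ℝ)^2) * ((2*(l:ℝ)+1)^2) := by
            intro l; field_simp; ring
          rw [Finset.sum_congr rfl (fun l _ => hterm l), Finset.sum_add_distrib,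
            ← Finset.mul_sum, ← Finset.mul_sum]
          field_simp
          ring
        rw [e1, sum_odds]
        have h2 := sum_odds_sq d
        have h3 : 2*(∑ l ∈ Finset.range d, (2*(l:ℝ)+1)^2)/m0^2 ≤ 8*(d:ℝ)^3/m0^2 := by
          have hnum : 2*(∑ l ∈ Finset.range d, (2*(l:ℝ)+1)^2) ≤ 8*(d:ℝ)^3 := by linarith
          exact div_le_div_of_nonneg_right hnum (by positivity)
        linarith
      calc Real.exp (-((d:ℝ)^2/(m0:ℝ) + 8*(d:ℝ)^3/(m0:ℝ)^2))
          ≤ Real.exp (∑ l ∈ Finset.range d, -((2*(l:ℝ)+1)/m0 + 2*((2*(l:ℝ)+1)/m0)^2)) :=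
            Real.exp_le_exp.mpr hsum
        _ = ∏ l ∈ Finset.range d,
            Real.exp (-((2*(l:ℝ)+1)/m0 + 2*((2*(l:ℝ)+1)/m0)^2)) := hexp.symm
        _ ≤ ∏ l ∈ Finset.range d, (((n:ℝ) - m0 - l) / (m0 + l + 1)) := by
            apply Finset.prod_le_prod (fun l _ => (Real.exp_pos _).le) hfac
    rw [hcp]
    apply mul_le_mul hchoose hprodge (Real.exp_pos _).le (Nat.cast_nonneg _)

set_option maxHeartbeats 1000000 in
lemma numeric_core (β ε c nn dd mm : ℝ)
    (hβ : 1 < β) (hε : 0 < ε) (hε256 : ε ≤ (β-1)/256)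
    (hc2 : β * c^2 = (β-1) * ε^2)
    (hn2 : 2 ≤ nn) (hεn : 3 ≤ ε*nn)
    (hd1 : ε*nn - 1 ≤ dd) (hd2 : dd ≤ ε*nn)
    (hm1 : (nn-1)/2 ≤ mm) (hm2 : 2*mm ≤ nn) (hm3 : nn ≤ 2*mm + 1)
    (hlog : Real.log (nn+1) + (4*(β-1)*ε + 2*β*ε + 4*ε^2) ≤ (β-1)*ε^2*nn) :
    Real.log (nn+1) + (dd^2/mm + 8*dd^3/mm^2) + β*c^2*nn/2
      ≤ β*(2*(mm+dd)-nn)^2/(2*nn) := by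
  have hnpos : (0:ℝ) < nn := by linarith
  have hmpos : (0:ℝ) < mm := by linarith
  have hβ0 : (0:ℝ) < β := by linarith
  have hdd0 : (0:ℝ) ≤ dd := by linarith
  have hdd2' : (2:ℝ) ≤ dd := by linarith
  have hM : 2*dd - 1 ≤ 2*(mm+dd) - nn := by linarith
  have hM0 : (0:ℝ) ≤ 2*dd - 1 := by linarith
  -- D1
  have D1 : β*(2*dd-1)^2/(2*nn) ≤ β*(2*(mm+dd)-nn)^2/(2*nn) := by
    apply div_le_div_of_nonneg_right _ (by positivity)
    apply mul_le_mul_of_nonneg_left _ hβ0.le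
    exact pow_le_pow_left₀ hM0 hM 2
  -- D2
  have D2 : β*(2*dd-1)^2/(2*nn) = 2*β*dd^2/nn - 2*β*dd/nn + β/(2*nn) := by
    field_simp; ring
  -- D3
  have hdd2 : dd^2 ≤ ε^2*nn^2 := by
    have h := mul_le_mul hd2 hd2 hdd0 (by positivity : (0:ℝ) ≤ ε*nn)
    calc dd^2 = dd*dd := by ring
      _ ≤ (ε*nn)*(ε*nn) := h
      _ = ε^2*nn^2 := by ring
  have D3 : dd^2/mm ≤ 2*dd^2/nn + 4*ε^2 := by
    have hhalf : (0:ℝ) < (nn-1)/2 := by linarith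
    have s1 : dd^2/mm ≤ dd^2/((nn-1)/2) :=
      div_le_div_of_nonneg_left (by positivity) hhalf hm1
    have s2 : dd^2/((nn-1)/2) = 2*dd^2/(nn-1) := by
      rw [div_div_eq_mul_div]; ring
    have hne1 : nn - 1 ≠ 0 := by linarith
    have hne0 : nn ≠ 0 := by linarith
    have s3 : 2*dd^2/(nn-1) - 2*dd^2/nn = 2*dd^2/(nn*(nn-1)) := by
      field_simp
      ring
    have s4 : 2*dd^2/(nn*(nn-1)) ≤ 4*ε^2 := by
      rw [div_le_iff₀ (by nlinarith : (0:ℝ) < nn*(nn-1))]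
      have h0 : (0:ℝ) ≤ ε^2*nn*(nn-2) := by
        apply mul_nonneg (by positivity) (by linarith)
      linarith [h0, hdd2]
    linarith [s1, s2 ▸ s1]
  -- D4
  have D4 : 8*dd^3/mm^2 ≤ (β-1)*ε^2*nn/2 := by
    have hm4 : nn/4 ≤ mm := by linarith
    have hmm2 : nn^2/16 ≤ mm^2 := by
      have h := mul_le_mul hm4 hm4 (by positivity : (0:ℝ) ≤ nn/4) (by linarith : (0:ℝ) ≤ mm)
      linarith [h]
    have hdd3 : dd^3 ≤ ε^3*nn^3 := by
      have h := pow_le_pow_left₀ hdd0 hd2 3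
      calc dd^3 ≤ (ε*nn)^3 := h
        _ = ε^3*nn^3 := by ring
    have s1 : 8*dd^3/mm^2 ≤ 8*dd^3/(nn^2/16) :=
      div_le_div_of_nonneg_left (by positivity) (by positivity) hmm2
    have s2 : 8*dd^3/(nn^2/16) = 128*dd^3/nn^2 := by
      rw [div_div_eq_mul_div]; ring
    have s3 : 128*dd^3/nn^2 ≤ 128*ε^3*nn := by
      rw [div_le_iff₀ (by positivity)]
      linarith [hdd3]
    have s4 : 128*ε^3*nn ≤ (β-1)*ε^2*nn/2 := by
      have h0 : (0:ℝ) ≤ ε^2*nn*((β-1)/2 - 128*ε) := by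
        apply mul_nonneg (by positivity) (by linarith)
      linarith [h0]
    linarith [s2 ▸ s1]
  -- D5
  have D5 : 2*(β-1)*ε^2*nn - 4*(β-1)*ε ≤ 2*β*dd^2/nn - 2*dd^2/nn := by
    have hεn1 : (0:ℝ) ≤ ε*nn - 1 := by linarith
    have key : nn*(ε^2*nn - 2*ε) ≤ dd^2 := by
      have hsq := mul_le_mul hd1 hd1 hεn1 hdd0
      linarith [hsq]
    have hX : ε^2*nn - 2*ε ≤ dd^2/nn := by
      rw [le_div_iff₀ hnpos]
      linarith
    have e : 2*β*dd^2/nn - 2*dd^2/nn = 2*(β-1)*(dd^2/nn) := by ring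
    rw [e]
    have := mul_le_mul_of_nonneg_left hX (by linarith : (0:ℝ) ≤ 2*(β-1))
    linarith
  -- D6
  have D6 : 2*β*dd/nn ≤ 2*β*ε := by
    have hY : dd/nn ≤ ε := by rw [div_le_iff₀ hnpos]; linarith
    have e : 2*β*dd/nn = (2*β)*(dd/nn) := by ring
    rw [e]
    have := mul_le_mul_of_nonneg_left hY (by linarith : (0:ℝ) ≤ 2*β)
    linarith
  -- combine
  have hc2' : β*c^2*nn/2 = (β-1)*ε^2*nn/2 := by linear_combination (nn/2) * hc2
  have hpos : (0:ℝ) ≤ β/(2*nn) := by positivity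
  linarith [D1, D2, D3, D4, D5, D6, hc2', hpos, hlog]

lemma eventually_log_bound (a K : ℝ) (ha : 0 < a) :
    ∀ᶠ n : ℕ in Filter.atTop, Real.log ((n:ℝ)+1) + K ≤ a*(n:ℝ) := by
  have hT : Filter.Tendsto (fun n : ℕ => (n:ℝ)+1) Filter.atTop Filter.atTop :=
    Filter.tendsto_atTop_add_const_right _ 1 tendsto_natCast_atTop_atTop
  have hlo := Real.isLittleO_log_id_atTop.def (half_pos ha)
  have h1 : ∀ᶠ n : ℕ in Filter.atTop, ‖Real.log ((n:ℝ)+1)‖ ≤ a/2 * ‖(n:ℝ)+1‖ :=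
    hT.eventually hlo
  have h2 : ∀ᶠ n : ℕ in Filter.atTop, 2*(K + a/2)/a ≤ (n:ℝ) :=
    tendsto_natCast_atTop_atTop.eventually_ge_atTop _
  filter_upwards [h1, h2] with n hn1 hn2
  have hnn : (0:ℝ) ≤ (n:ℝ) := Nat.cast_nonneg n
  have h3 : Real.log ((n:ℝ)+1) ≤ a/2 * ((n:ℝ)+1) := by
    calc Real.log ((n:ℝ)+1) ≤ ‖Real.log ((n:ℝ)+1)‖ := le_abs_self _
      _ ≤ a/2 * ‖(n:ℝ)+1‖ := hn1
      _ = a/2 * ((n:ℝ)+1) := by rw [Real.norm_eq_abs, abs_of_nonneg (by linarith)]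
  have h4 : 2*(K + a/2)/a ≤ (n:ℝ) := hn2
  rw [div_le_iff₀ ha] at h4
  linarith


/-- For the supercritical (`β > 1`) Curie-Weiss model, the Gibbs measure fails
normal concentration at scale `√n`: the magnetisation is bi-modal, with mass at
least `1/4` at each of `{m ≥ cn}` and `{m ≤ -cn}` for a constant `c > 0`, even
though `m/2` is 1-Lipschitz for the Hamming metric and the mean magnetisation
vanishes. -/
theorem stmt16 (β : ℝ) (hβ : 1 < β) :
    ∃ c : ℝ, 0 < c ∧ ∃ N : ℕ, ∀ n : ℕ, N ≤ n → 0 < n →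
      1 / 4 ≤ pr (gibbs n β) (fun σ => c * n ≤ mag σ) ∧
      1 / 4 ≤ pr (gibbs n β) (fun σ => mag σ ≤ -(c * n)) ∧
      integ (gibbs n β) mag = 0 ∧
      IsLip (fun a b : Fin n → Bool => (hammingDist a b : ℝ))
        (fun σ => mag σ / 2) := by
  have hβ0 : (0:ℝ) < β := by linarith
  set ε := min (1/16 : ℝ) ((β-1)/256) with hεdef
  have hε : 0 < ε := lt_min (by norm_num) (by linarith)
  have hε16 : ε ≤ 1/16 := min_le_left _ _
  have hε256 : ε ≤ (β-1)/256 := min_le_right _ _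
  have hfrac : 0 < (β-1)/β := div_pos (by linarith) hβ0
  set s := Real.sqrt ((β-1)/β) with hsdef
  have hs0 : 0 < s := Real.sqrt_pos.mpr hfrac
  have hs1 : s ≤ 1 := Real.sqrt_le_one.mpr (by rw [div_le_one hβ0]; linarith)
  have hs2 : s^2 = (β-1)/β := Real.sq_sqrt hfrac.le
  refine ⟨ε * s, mul_pos hε hs0, ?_⟩
  have hcε : ε * s ≤ ε := by nlinarith
  have hc2 : β * (ε*s)^2 = (β-1) * ε^2 := by
    have : (ε*s)^2 = ε^2 * ((β-1)/β) := by rw [mul_pow, hs2]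
    rw [this]
    field_simp
  obtain ⟨N1, hN1⟩ := Filter.eventually_atTop.mp
    (eventually_log_bound ((β-1)*ε^2) (4*(β-1)*ε + 2*β*ε + 4*ε^2)
      (mul_pos (by linarith) (by positivity)))
  obtain ⟨N2, hN2⟩ := Filter.eventually_atTop.mp
    ((Filter.Tendsto.const_mul_atTop hε tendsto_natCast_atTop_atTop).eventually_ge_atTop 3)
  refine ⟨max N1 (max N2 2), ?_⟩
  intro n hn hn0
  have hnN1 : N1 ≤ n := le_trans (le_max_left _ _) hn
  have hnN2 : N2 ≤ n := le_trans (le_trans (le_max_left _ _) (le_max_right _ _)) hn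
  have hn2 : 2 ≤ n := le_trans (le_trans (le_max_right _ _) (le_max_right _ _)) hn
  have hn2r : (2:ℝ) ≤ (n:ℝ) := by exact_mod_cast hn2
  have hnr0 : (0:ℝ) < (n:ℝ) := by linarith
  have hlog := hN1 n hnN1
  have hεn : 3 ≤ ε*(n:ℝ) := hN2 n hnN2
  set d := ⌊ε*(n:ℝ)⌋₊ with hddef
  set m0 := n/2 with hm0def
  have hd2 : (d:ℝ) ≤ ε*(n:ℝ) := Nat.floor_le (by positivity)
  have hd1 : ε*(n:ℝ) - 1 ≤ (d:ℝ) := le_of_lt (Nat.sub_one_lt_floor _)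
  have hdn : d ≤ n/16 := by
    have h1 : ε*(n:ℝ) ≤ (n:ℝ)/16 := by
      calc ε*(n:ℝ) ≤ (1/16)*(n:ℝ) := by
            apply mul_le_mul_of_nonneg_right hε16 (by positivity)
        _ = (n:ℝ)/16 := by ring
    calc d ≤ ⌊(n:ℝ)/16⌋₊ := Nat.floor_le_floor h1
      _ = n/16 := by
          rw [show ((16:ℝ)) = ((16:ℕ):ℝ) by norm_num, Nat.floor_div_natCast, Nat.floor_natCast]
  have hd4 : 4*d ≤ n/2 := by omega
  have hm2 : 2*m0 ≤ n := by omega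
  have hm3 : n ≤ 2*m0 + 1 := by omega
  have hm2r : 2*(m0:ℝ) ≤ (n:ℝ) := by exact_mod_cast hm2
  have hm3r : (n:ℝ) ≤ 2*(m0:ℝ) + 1 := by exact_mod_cast hm3
  have hm1 : ((n:ℝ)-1)/2 ≤ (m0:ℝ) := by linarith
  have numeric := numeric_core β ε (ε*s) (n:ℝ) (d:ℝ) (m0:ℝ) hβ hε hε256 hc2 hn2r hεn
    hd1 hd2 hm1 hm2r hm3r hlog
  have clb := choose_lb n d hd4
  set j := m0 + d with hjdef
  have hjr : ((j:ℕ):ℝ) = (m0:ℝ) + (d:ℝ) := by push_cast [hjdef]; ring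
  have hrM : (ε*s)*(n:ℝ) ≤ 2*((j:ℕ):ℝ) - (n:ℝ) := by
    rw [hjr]
    have h1 : (ε*s)*(n:ℝ) ≤ ε*(n:ℝ) := by
      apply mul_le_mul_of_nonneg_right hcε (by positivity)
    linarith
  -- key sum comparison
  set E := (d:ℝ)^2/(m0:ℝ) + 8*(d:ℝ)^3/(m0:ℝ)^2 with hEdef
  set A := β*((ε*s)*(n:ℝ))^2/(2*(n:ℝ)) with hAdef
  set B := β*(2*((m0:ℝ)+(d:ℝ))-(n:ℝ))^2/(2*(n:ℝ)) with hBdef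
  have hA : A = β*(ε*s)^2*(n:ℝ)/2 := by
    rw [hAdef]
    field_simp
  have hlogchain : Real.log ((n:ℝ)+1) + (A + E) ≤ B := by
    rw [hA]
    linarith [numeric]
  have hexpB : ((n:ℝ)+1) * Real.exp (A+E) ≤ Real.exp B := by
    rw [show ((n:ℝ)+1) = Real.exp (Real.log ((n:ℝ)+1)) from
      (Real.exp_log (by linarith)).symm, ← Real.exp_add]
    exact Real.exp_le_exp.mpr (by linarith [hlogchain])
  have hmid : (2:ℝ)^n * Real.exp A ≤ (n.choose j : ℝ) * Real.exp B := by
    have h5 : ((n:ℝ)+1) * Real.exp (A+E) * Real.exp (-E) ≤ Real.exp B * Real.exp (-E) :=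
      mul_le_mul_of_nonneg_right hexpB (Real.exp_pos _).le
    have h6 : ((n:ℝ)+1) * Real.exp (A+E) * Real.exp (-E) = ((n:ℝ)+1) * Real.exp A := by
      rw [mul_assoc, ← Real.exp_add, show A+E+-E = A by ring]
    have h7 : ((n:ℝ)+1) * Real.exp A ≤ Real.exp B * Real.exp (-E) := by
      rw [← h6]; exact h5
    have h8 : (2:ℝ)^n * Real.exp A = ((2:ℝ)^n/((n:ℝ)+1)) * (((n:ℝ)+1) * Real.exp A) := by
      field_simp
    rw [h8]
    calc ((2:ℝ)^n/((n:ℝ)+1)) * (((n:ℝ)+1) * Real.exp A)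
        ≤ ((2:ℝ)^n/((n:ℝ)+1)) * (Real.exp B * Real.exp (-E)) := by
          apply mul_le_mul_of_nonneg_left h7 (by positivity)
      _ = ((2:ℝ)^n/((n:ℝ)+1) * Real.exp (-E)) * Real.exp B := by ring
      _ ≤ (n.choose j : ℝ) * Real.exp B := by
          apply mul_le_mul_of_nonneg_right _ (Real.exp_pos _).le
          exact clb
  have key : (∑ σ : Fin n → Bool, if |mag σ| < (ε*s)*(n:ℝ) then wt n β σ else 0)
      ≤ ∑ σ : Fin n → Bool, if (ε*s)*(n:ℝ) ≤ mag σ then wt n β σ else 0 := by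
    calc (∑ σ : Fin n → Bool, if |mag σ| < (ε*s)*(n:ℝ) then wt n β σ else 0)
        ≤ 2^n * Real.exp (β * ((ε*s)*(n:ℝ))^2 / (2*(n:ℝ))) :=
          sum_center_le n hn0 β hβ0.le _
      _ = (2:ℝ)^n * Real.exp A := rfl
      _ ≤ (n.choose j : ℝ) * Real.exp B := hmid
      _ = (n.choose j : ℝ) * Real.exp (β * (2*((j:ℕ):ℝ)-(n:ℝ))^2 / (2*(n:ℝ))) := by
          rw [hjr]
      _ ≤ _ := sum_tail_ge n β _ j hrM
  have hrpos : (0:ℝ) < (ε*s)*(n:ℝ) := by positivity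
  have goal1 : 1/4 ≤ pr (gibbs n β) (fun σ => (ε*s)*(n:ℝ) ≤ mag σ) :=
    pr_tail_ge n hn0 β _ hrpos key
  refine ⟨goal1, ?_, integ_gibbs_mag n hn0 β, fun x y => lip_mag x y⟩
  rw [← pr_flip n hn0 β ((ε*s)*(n:ℝ))]
  exact goal1
end
end
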